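/- arXiv:2603.05985 — 9 statements merged into one kernel-verified Lean document; each statement's English description precedes it below -/
import Mathlib

section
/- Let E/F be a quadratic extension, τ ∈ E× with tr_{E/F}(τ) = 0, and V a nondegenerate quadratic space over E with form q. Let 𝐕_τ = Res_{E/F}(V) with form 𝐪 = tr_{E/F}(τ q). For an F-Lagrangian subspace L ⊆ 𝐕_τ, define L_an = {x ∈ L : q(x,y) = 0 for all y ∈ L}. Then L_an = L ∩ τL; in particular L_an is an E-subspace of V. -/
open Module

/-- With `E/F` quadratic, `τ ∈ E×` of trace zero, `(V,q)` a nondegenerate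
quadratic `E`-space and `𝐕_τ = Res_{E/F}(V)` carrying the form `tr_{E/F}(τ q)`, for any
`F`-Lagrangian `L ⊆ 𝐕_τ` one has `L_an = L ∩ τL`, where
`L_an = {x ∈ L : q(x,y) = 0 ∀ y ∈ L}`. -/
theorem stmt1
    (F E V : Type*) [Field F] [Field E] [Algebra F E] [CharZero F]
    (hquad : Module.finrank F E = 2)
    (τ : E) (hτ : τ ≠ 0) (htr : Algebra.trace F E τ = 0)
    [AddCommGroup V] [Module E V] [Module F V] [IsScalarTower F E V]
    [FiniteDimensional E V]
    (q : LinearMap.BilinForm E V) (hsymm : q.IsSymm) (hnd : q.Nondegenerate)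
    (L : Submodule F V)
    (hiso : ∀ x ∈ L, ∀ y ∈ L, Algebra.trace F E (τ * q x y) = 0)
    (hdim : 2 * Module.finrank F L = Module.finrank F V) :
    {x | x ∈ L ∧ ∀ y ∈ L, q x y = 0} = (L : Set V) ∩ ((fun v => τ • v) '' (L : Set V)) := by
  have hFE : FiniteDimensional F E := Module.finite_of_finrank_eq_succ hquad
  have hFV : FiniteDimensional F V := Module.Finite.trans E V
  -- The trace of `1` is `2 ≠ 0`.
  have htr1 : Algebra.trace F E 1 ≠ 0 := by
    have : Algebra.trace F E (algebraMap F E 1) = (finrank F E : F) • 1 := by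
      rw [Algebra.trace_algebraMap]; norm_num
    rw [map_one] at this
    rw [this, hquad]
    norm_num
  -- every trace-zero element is an `F`-multiple of `τ`.
  have hker : ∀ c : E, Algebra.trace F E c = 0 → ∃ b : F, c = b • τ := by
    intro c hc
    have htop : (LinearMap.range (Algebra.trace F E : E →ₗ[F] F)) = ⊤ := by
      rw [LinearMap.range_eq_top]
      intro a
      refine ⟨(a / Algebra.trace F E 1) • 1, ?_⟩
      rw [map_smul, smul_eq_mul, div_mul_cancel₀ _ htr1]
    have hkd : finrank F (LinearMap.ker (Algebra.trace F E : E →ₗ[F] F)) = 1 := by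
      have h1 := LinearMap.finrank_range_add_finrank_ker (Algebra.trace F E : E →ₗ[F] F)
      rw [htop, finrank_top, hquad, Module.finrank_self] at h1
      omega
    have hsp : Submodule.span F {τ} ≤ LinearMap.ker (Algebra.trace F E : E →ₗ[F] F) := by
      rw [Submodule.span_le, Set.singleton_subset_iff]
      exact htr
    have heq : Submodule.span F {τ} = LinearMap.ker (Algebra.trace F E : E →ₗ[F] F) := by
      apply Submodule.eq_of_le_of_finrank_le hsp
      rw [hkd, finrank_span_singleton hτ]
    have : c ∈ Submodule.span F ({τ} : Set E) := by
      rw [heq]; exact hc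
    obtain ⟨b, hb⟩ := Submodule.mem_span_singleton.mp this
    exact ⟨b, hb.symm⟩
  -- `tr (τ²) ≠ 0`.
  have htr2 : Algebra.trace F E (τ * τ) ≠ 0 := by
    intro h
    obtain ⟨b, hb⟩ := hker _ h
    have hτb : τ = algebraMap F E b := by
      have : τ * τ = algebraMap F E b * τ := by rw [hb, Algebra.smul_def]
      exact mul_right_cancel₀ hτ this
    have : Algebra.trace F E τ = (finrank F E : F) • b := by
      rw [hτb, Algebra.trace_algebraMap]; norm_num
    rw [htr, hquad] at this
    have hb0 : b = 0 := by
      have := this.symm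
      norm_num at this
      exact this
    rw [hτb, hb0, map_zero] at hτ
    exact hτ rfl
  -- key: if `tr (τ c) = 0` and `tr (τ² c) = 0` then `c = 0`.
  have key : ∀ c : E, Algebra.trace F E (τ * c) = 0 →
      Algebra.trace F E (τ * (τ * c)) = 0 → c = 0 := by
    intro c h1 h2
    obtain ⟨b, hb⟩ := hker _ h1
    have hc : c = algebraMap F E b := by
      have : τ * c = algebraMap F E b * τ := by rw [hb, Algebra.smul_def]
      rw [mul_comm (algebraMap F E b) τ] at this
      exact mul_left_cancel₀ hτ this
    have : Algebra.trace F E (τ * (τ * c)) = b • Algebra.trace F E (τ * τ) := by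
      rw [hc, show τ * (τ * algebraMap F E b) = b • (τ * τ) from by
        rw [Algebra.smul_def]; ring, map_smul]
    rw [h2] at this
    have hb0 : b = 0 := by
      rcases smul_eq_zero.mp this.symm with h | h
      · exact h
      · exact absurd h htr2
    rw [hc, hb0, map_zero]
  -- the `F`-bilinear form `B x y = tr (τ q x y)`.
  set B : LinearMap.BilinForm F V :=
    (LinearMap.restrictScalars₁₂ F F q).compr₂
      ((Algebra.trace F E).comp ((LinearMap.mul F E) τ)) with hB
  have hBapply : ∀ x y : V, B x y = Algebra.trace F E (τ * q x y) := fun x y => rfl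
  have hBrefl : B.IsRefl := by
    intro x y h
    rw [hBapply] at h ⊢
    rw [← hsymm.eq x y]
    exact h
  have hBnd : B.Nondegenerate := by
    refine (LinearMap.IsRefl.nondegenerate_iff_separatingLeft hBrefl).mpr ?_
    intro x hx
    apply hnd.1 x
    intro y
    by_contra hq0
    have := hx ((τ⁻¹ * (q x y)⁻¹) • y)
    have heq : (q x) ((τ⁻¹ * (q x y)⁻¹) • y) = τ⁻¹ := by
      rw [map_smul, smul_eq_mul]
      field_simp
    rw [hBapply, heq, mul_inv_cancel₀ hτ] at this
    exact htr1 this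
  -- `L` equals its `B`-orthogonal complement.
  have hle : L ≤ B.orthogonal L := by
    intro x hx
    rw [LinearMap.BilinForm.mem_orthogonal_iff]
    intro n hn
    exact hiso n hn x hx
  have horth : B.orthogonal L = L := by
    symm
    apply Submodule.eq_of_le_of_finrank_le hle
    rw [LinearMap.BilinForm.finrank_orthogonal hBnd L]
    have : finrank F L ≤ finrank F V := Submodule.finrank_le L
    omega
  -- conclude
  ext x
  simp only [Set.mem_setOf_eq, Set.mem_inter_iff, SetLike.mem_coe, Set.mem_image]
  constructor
  · rintro ⟨hxL, hq0⟩
    refine ⟨hxL, τ⁻¹ • x, ?_, smul_inv_smul₀ hτ x⟩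
    rw [← horth, LinearMap.BilinForm.mem_orthogonal_iff]
    intro n hn
    have : q n (τ⁻¹ • x) = τ⁻¹ * q n x := by rw [map_smul, smul_eq_mul]
    show B n (τ⁻¹ • x) = 0
    rw [hBapply, this, ← hsymm.eq x n, hq0 n hn, mul_zero, mul_zero, map_zero]
  · rintro ⟨hxL, z, hzL, rfl⟩
    refine ⟨hxL, fun y hy => ?_⟩
    have hq1 : q (τ • z) y = τ * q z y := by
      rw [LinearMap.map_smul₂, smul_eq_mul]
    have h1 : Algebra.trace F E (τ * q z y) = 0 := hiso z hzL y hy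
    have h2 : Algebra.trace F E (τ * (τ * q z y)) = 0 := by
      rw [← hq1]; exact hiso _ hxL y hy
    rw [hq1, key _ h1 h2, mul_zero]
end

section
/- In the setting above, L_an equals the set {x ∈ V : q(x,y) = 0 for all y ∈ L}, i.e. the radical of L inside L coincides with the q-orthogonal complement of L in all of V. -/
open Module

/-- In the base change doubling setting, for an `F`-Lagrangian `L` of `𝐕_τ`,
the radical `L_an = {x ∈ L : q(x,L) = 0}` coincides with the `q`-orthogonal complement
`{x ∈ V : q(x,L) = 0}` of `L` in all of `V`. -/
theorem stmt2
    (F E V : Type*) [Field F] [Field E] [Algebra F E] [CharZero F]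
    (hquad : Module.finrank F E = 2)
    (τ : E) (hτ : τ ≠ 0) (htr : Algebra.trace F E τ = 0)
    [AddCommGroup V] [Module E V] [Module F V] [IsScalarTower F E V]
    [FiniteDimensional E V]
    (q : LinearMap.BilinForm E V) (hsymm : q.IsSymm) (hnd : q.Nondegenerate)
    (L : Submodule F V)
    (hiso : ∀ x ∈ L, ∀ y ∈ L, Algebra.trace F E (τ * q x y) = 0)
    (hdim : 2 * Module.finrank F L = Module.finrank F V) :
    {x | x ∈ L ∧ ∀ y ∈ L, q x y = 0} = {x : V | ∀ y ∈ L, q x y = 0} := by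
  have hFE : FiniteDimensional F E := FiniteDimensional.of_finrank_pos (by omega)
  have hFV : FiniteDimensional F V := FiniteDimensional.trans F E V
  -- the F-bilinear form B(x,y) = tr(τ q(x,y))
  set B : LinearMap.BilinForm F V := LinearMap.mk₂ F
      (fun x y => Algebra.trace F E (τ * q x y))
      (by intro x x' y; simp only [map_add, LinearMap.add_apply, mul_add])
      (by intro c x y
          rw [show (c : F) • x = (algebraMap F E c) • x from (algebraMap_smul E c x).symm,
            map_smul, LinearMap.smul_apply, smul_eq_mul, mul_left_comm, ← Algebra.smul_def,
            map_smul, smul_eq_mul])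
      (by intro x y y'; simp only [map_add, mul_add])
      (by intro c x y
          rw [show (c : F) • y = (algebraMap F E c) • y from (algebraMap_smul E c y).symm,
            map_smul, smul_eq_mul, mul_left_comm, ← Algebra.smul_def,
            map_smul, smul_eq_mul]) with hB
  have hBapp : ∀ x y : V, B x y = Algebra.trace F E (τ * q x y) := fun _ _ => rfl
  have hBsymm : B.IsSymm := by
    refine ⟨fun x y => ?_⟩
    simp only [hBapp, RingHom.id_apply]
    rw [show q x y = q y x from hsymm.eq x y]
  have hBrefl : B.IsRefl := hBsymm.isRefl
  -- B is nondegenerate, using nondegeneracy of the trace form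
  have hBnd : B.Nondegenerate := by
    refine .ofSeparatingLeft ?_
    intro x hx
    apply hnd.1 x
    intro y
    by_contra hz
    have key : ∀ c : E, Algebra.trace F E (τ * q x y * c) = 0 := by
      intro c
      have := hx (c • y)
      rw [hBapp, map_smul, smul_eq_mul, mul_left_comm] at this
      rw [mul_comm]
      exact this
    have := (traceForm_nondegenerate F E).1 (τ * q x y) (fun c => by
      simpa [Algebra.traceForm_apply] using key c)
    exact hτ (by simpa [hz] using this)
  -- L is contained in its B-orthogonal
  have hLle : L ≤ B.orthogonal L := by
    intro x hx y hy
    exact hiso y hy x hx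
  have hfr : finrank F (B.orthogonal L) = finrank F L := by
    rw [LinearMap.BilinForm.finrank_orthogonal hBnd L]
    omega
  have hLeq : B.orthogonal L = L :=
    (Submodule.eq_of_le_of_finrank_le hLle (by omega)).symm
  ext x
  simp only [Set.mem_setOf_eq]
  constructor
  · rintro ⟨-, h⟩; exact h
  · intro h
    refine ⟨?_, h⟩
    rw [← hLeq]
    intro y hy
    show B y x = 0
    rw [hBapp, show q y x = q x y from hsymm.eq y x, h y hy, mul_zero, map_zero]
end

section
/- Let L be a Lagrangian of 𝐕_τ with L_an = {0}. Then the restriction of q to L takes values in F, making L a quadratic space over F, and the natural E-linear map L ⊗_F E → V is an isometry of quadratic spaces over E. -/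
open Module

/-- If `L` is a Lagrangian of `𝐕_τ` with `L_an = {0}`, then `q` restricted to
`L` takes values in `F`, and the natural `E`-linear map `E ⊗_F L → V`, `e ⊗ x ↦ e • x`,
is an isometry of quadratic spaces over `E` (it is bijective, and it matches the base
change of the `F`-valued restricted form with `q`, which holds on pure tensors by
`E`-bilinearity). -/
theorem stmt3
    (F E V : Type*) [Field F] [Field E] [Algebra F E] [CharZero F]
    (hquad : Module.finrank F E = 2)
    (τ : E) (hτ : τ ≠ 0) (htr : Algebra.trace F E τ = 0)
    [AddCommGroup V] [Module E V] [Module F V] [IsScalarTower F E V]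
    [FiniteDimensional E V]
    (q : LinearMap.BilinForm E V) (hsymm : q.IsSymm) (hnd : q.Nondegenerate)
    (L : Submodule F V)
    (hiso : ∀ x ∈ L, ∀ y ∈ L, Algebra.trace F E (τ * q x y) = 0)
    (hdim : 2 * Module.finrank F L = Module.finrank F V)
    (han : ∀ x ∈ L, (∀ y ∈ L, q x y = 0) → x = 0) :
    (∀ x ∈ L, ∀ y ∈ L, q x y ∈ (algebraMap F E).range) ∧
      Function.Bijective ((L.subtype).liftBaseChange E) := by
  have hFE : FiniteDimensional F E := by
    apply FiniteDimensional.of_finrank_pos; omega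
  have hCE : CharZero E := charZero_of_injective_algebraMap (algebraMap F E).injective
  -- the F-linear map e ↦ trace(τ e)
  set T : E →ₗ[F] F := (Algebra.trace F E) ∘ₗ (LinearMap.mulLeft F τ) with hT
  have hTapp : ∀ e : E, T e = Algebra.trace F E (τ * e) := fun e => rfl
  -- range of algebraMap as a submodule
  have hle : LinearMap.range (Algebra.linearMap F E) ≤ LinearMap.ker T := by
    rintro _ ⟨a, rfl⟩
    simp only [LinearMap.mem_ker, hTapp, Algebra.linearMap_apply]
    rw [mul_comm, ← Algebra.smul_def, map_smul, htr, smul_zero]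
  have hTne : T ≠ 0 := by
    intro h
    apply hτ
    apply (traceForm_nondegenerate F E).1 τ
    intro e
    have : T e = 0 := by rw [h]; rfl
    rw [hTapp] at this
    simpa [Algebra.traceForm_apply] using this
  have hrange1 : finrank F (LinearMap.range T) = 1 := by
    have h1 : finrank F (LinearMap.range T) ≤ 1 := by
      simpa using (LinearMap.range T).finrank_le
    have h2 : LinearMap.range T ≠ ⊥ := by
      simpa [LinearMap.range_eq_bot] using hTne
    have h3 : finrank F (LinearMap.range T) ≠ 0 := fun h =>
      h2 (Submodule.finrank_eq_zero.mp h)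
    omega
  have hker1 : finrank F (LinearMap.ker T) = 1 := by
    have := LinearMap.finrank_range_add_finrank_ker T
    rw [hquad, hrange1] at this
    omega
  have hrangeAlg : finrank F (LinearMap.range (Algebra.linearMap F E)) = 1 := by
    rw [LinearMap.finrank_range_of_inj (algebraMap F E).injective]
    exact Module.finrank_self F
  have hkey : LinearMap.range (Algebra.linearMap F E) = LinearMap.ker T :=
    Submodule.eq_of_le_of_finrank_le hle (by rw [hker1, hrangeAlg])
  -- Part 1
  have part1 : ∀ x ∈ L, ∀ y ∈ L, q x y ∈ (algebraMap F E).range := by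
    intro x hx y hy
    have : q x y ∈ LinearMap.ker T := by
      rw [LinearMap.mem_ker, hTapp]
      exact hiso x hx y hy
    rw [← hkey] at this
    obtain ⟨a, ha⟩ := this
    exact ⟨a, ha⟩
  refine ⟨part1, ?_⟩
  -- τ is not in F
  have hτF : ∀ a : F, τ ≠ algebraMap F E a := by
    intro a ha
    have : Algebra.trace F E (algebraMap F E a) = 0 := by rw [← ha, htr]
    rw [Algebra.trace_algebraMap, hquad] at this
    have ha0 : a = 0 := add_self_eq_zero.mp (by simpa [two_smul] using this)
    exact hτ (by rw [ha, ha0, map_zero])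
  -- key injectivity lemma
  have hinjkey : ∀ x y : L, (x : V) + τ • (y : V) = 0 → x = 0 ∧ y = 0 := by
    intro x y hxy
    have hq : ∀ z ∈ L, q x z = 0 ∧ q y z = 0 := by
      intro z hz
      have h0 : q ((x : V) + τ • (y : V)) z = 0 := by rw [hxy]; simp
      rw [map_add, LinearMap.add_apply, map_smul, LinearMap.smul_apply,
        smul_eq_mul] at h0
      obtain ⟨a, ha⟩ := part1 x x.2 z hz
      obtain ⟨b, hb⟩ := part1 y y.2 z hz
      rw [← ha, ← hb] at h0
      have hb0 : b = 0 := by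
        by_contra hb0
        have hbE : algebraMap F E b ≠ 0 := fun h =>
          hb0 ((algebraMap F E).injective (by rw [h, map_zero]))
        apply hτF (-a / b)
        rw [map_div₀, map_neg, eq_div_iff hbE]
        linear_combination h0
      have ha0 : a = 0 := by
        rw [hb0, map_zero, mul_zero, add_zero] at h0
        exact (algebraMap F E).injective (by rw [h0, map_zero])
      constructor
      · rw [← ha, ha0, map_zero]
      · rw [← hb, hb0, map_zero]
    constructor
    · have := han x x.2 (fun z hz => (hq z hz).1)
      exact Subtype.ext this
    · have := han y y.2 (fun z hz => (hq z hz).2)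
      exact Subtype.ext this
  set f := (L.subtype).liftBaseChange E with hf
  -- surjectivity of (x,y) ↦ 1 ⊗ x + τ ⊗ y onto E ⊗[F] L
  have hb : LinearIndependent F ![1, τ] := by
    rw [LinearIndependent.pair_iff]
    intro s t hst
    by_contra hc
    have ht : t ≠ 0 := by
      rintro rfl
      simp only [zero_smul, add_zero, smul_eq_zero] at hst
      rcases hst with h | h
      · exact hc ⟨h, rfl⟩
      · exact one_ne_zero h
    have htE : algebraMap F E t ≠ 0 := fun h =>
      ht ((algebraMap F E).injective (by rw [h, map_zero]))
    apply hτF (-s / t)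
    rw [map_div₀, map_neg, eq_div_iff htE]
    have h1 : algebraMap F E s * 1 + algebraMap F E t * τ = 0 := by
      simpa [Algebra.smul_def] using hst
    linear_combination h1
  have hbasis : ∀ e : E, ∃ a b : F, e = a • (1 : E) + b • τ := by
    have hspan : Submodule.span F (Set.range ![1, τ]) = ⊤ := by
      apply Submodule.eq_top_of_finrank_eq
      rw [finrank_span_eq_card hb, hquad]
      simp
    intro e
    have he : e ∈ Submodule.span F (Set.range ![1, τ]) := by rw [hspan]; trivial
    have hrg : Set.range ![(1 : E), τ] = {1, τ} := by
      simp [Matrix.range_cons, Matrix.range_empty, Set.pair_comm]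
    rw [hrg, ← Set.singleton_union, Submodule.span_union] at he
    rw [Submodule.mem_sup] at he
    obtain ⟨u, hu, w, hw, huw⟩ := he
    rw [Submodule.mem_span_singleton] at hu hw
    obtain ⟨a, rfl⟩ := hu
    obtain ⟨b, rfl⟩ := hw
    exact ⟨a, b, by rw [← huw]⟩
  have hsurj : ∀ z : TensorProduct F E L, ∃ x y : L,
      z = 1 ⊗ₜ[F] x + τ ⊗ₜ[F] y := by
    intro z
    induction z using TensorProduct.induction_on with
    | zero => exact ⟨0, 0, by simp⟩
    | tmul e x =>
      obtain ⟨a, b, hab⟩ := hbasis e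
      exact ⟨a • x, b • x, by rw [hab, TensorProduct.add_tmul, TensorProduct.smul_tmul,
        TensorProduct.smul_tmul]⟩
    | add u v hu hv =>
      obtain ⟨x1, y1, h1⟩ := hu
      obtain ⟨x2, y2, h2⟩ := hv
      exact ⟨x1 + x2, y1 + y2, by rw [h1, h2]; simp [TensorProduct.tmul_add]; abel⟩
  have hfinj : Function.Injective f := by
    rw [← LinearMap.ker_eq_bot, Submodule.eq_bot_iff]
    intro z hz
    obtain ⟨x, y, rfl⟩ := hsurj z
    rw [LinearMap.mem_ker, map_add, LinearMap.liftBaseChange_tmul,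
      LinearMap.liftBaseChange_tmul, one_smul] at hz
    obtain ⟨hx, hy⟩ := hinjkey x y hz
    rw [hx, hy]
    simp
  have hFV : FiniteDimensional F V := FiniteDimensional.trans F E V
  have hdim2 : finrank F (TensorProduct F E L) = finrank F V := by
    rw [Module.finrank_tensorProduct, hquad, ← hdim]
  refine ⟨hfinj, ?_⟩
  have : Function.Injective (f.restrictScalars F) := hfinj
  have hsurj' := (LinearMap.injective_iff_surjective_of_finrank_eq_finrank hdim2).mp this
  exact hsurj'
end

section
/- Let L be a Lagrangian of 𝐕_τ and write L = L_an ⊕ L_ra for a choice of F-complement L_ra. Then: (a) the E-span E·L_ra of L_ra in V is a nondegenerate quadratic E-subspace isomorphic to L_ra ⊗_F E; (b) dim_E(E·L) = dim_E V − k and dim_E(E·L_ra) = dim_E V − 2k, where k = dim_E L_an; (c) L_an is a Lagrangian of the orthogonal complement (E·L_ra)^⊥ in V. -/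
open Module

section Aux
variable {F E : Type*} [Field F] [Field E] [Algebra F E] [CharZero F]

variable {F E : Type*} [Field F] [Field E] [Algebra F E] [CharZero F]

lemma aux_basis (hquad : Module.finrank F E = 2)
    (τ : E) (hτ : τ ≠ 0) (htr : Algebra.trace F E τ = 0) :
    ∃ b : Basis (Fin 2) F E, b 0 = 1 ∧ b 1 = τ := by
  have hnotF : ∀ a : F, τ ≠ a • (1 : E) := by
    intro a h
    have : Algebra.trace F E τ = Algebra.trace F E (algebraMap F E a) := by
      rw [h, Algebra.algebraMap_eq_smul_one]
    rw [htr, Algebra.trace_algebraMap, hquad] at this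
    have ha : a = 0 := by simpa using this.symm
    exact hτ (by rw [h, ha, zero_smul])
  have hli : LinearIndependent F ![(1 : E), τ] := by
    rw [LinearIndependent.pair_iff]
    intro s t hst
    by_cases ht : t = 0
    · subst ht
      simp only [add_zero, zero_smul] at hst
      refine ⟨?_, rfl⟩
      have : algebraMap F E s = 0 := by rwa [Algebra.algebraMap_eq_smul_one]
      exact (map_eq_zero _).mp this
    · exfalso
      apply hnotF (-s/t)
      have h1 : t • τ = (-s) • (1 : E) := by rw [neg_smul]; linear_combination hst
      calc τ = t⁻¹ • (t • τ) := by rw [smul_smul, inv_mul_cancel₀ ht, one_smul]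
        _ = (-s/t) • 1 := by rw [h1, smul_smul]; congr 1; field_simp
  exact ⟨basisOfLinearIndependentOfCardEqFinrank hli (by simp [hquad]),
    by simp [coe_basisOfLinearIndependentOfCardEqFinrank], by simp [coe_basisOfLinearIndependentOfCardEqFinrank]⟩

lemma aux_tausq (hquad : Module.finrank F E = 2)
    (τ : E) (hτ : τ ≠ 0) (htr : Algebra.trace F E τ = 0) :
    ∃ c : F, c ≠ 0 ∧ τ * τ = algebraMap F E c := by
  obtain ⟨b, hb0, hb1⟩ := aux_basis hquad τ hτ htr
  have htrace : Algebra.trace F E τ = b.repr (τ * τ) 1 := by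
    rw [Algebra.trace_eq_matrix_trace b, Matrix.trace, Fin.sum_univ_two, Matrix.diag_apply,
      Matrix.diag_apply, Algebra.leftMulMatrix_eq_repr_mul, Algebra.leftMulMatrix_eq_repr_mul,
      hb0, hb1, mul_one]
    have : b.repr τ 0 = 0 := by
      rw [← hb1, b.repr_self]; simp
    rw [this, zero_add]
  have hc1 : b.repr (τ * τ) 1 = 0 := by rw [← htrace, htr]
  refine ⟨b.repr (τ * τ) 0, ?_, ?_⟩
  · intro hc0
    have := b.sum_repr (τ * τ)
    rw [Fin.sum_univ_two, hc1, hc0, zero_smul, zero_smul, add_zero] at this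
    exact hτ (by have := mul_self_eq_zero.mp this.symm; exact this)
  · have h2 := b.sum_repr (τ * τ)
    rw [Fin.sum_univ_two, hc1, zero_smul, add_zero, hb0] at h2
    rw [Algebra.algebraMap_eq_smul_one]; exact h2.symm

lemma aux_indep (hquad : Module.finrank F E = 2)
    (τ : E) (hτ : τ ≠ 0) (htr : Algebra.trace F E τ = 0) :
    ∀ a c : F, algebraMap F E a + c • τ = 0 → a = 0 ∧ c = 0 := by
  obtain ⟨b, hb0, hb1⟩ := aux_basis hquad τ hτ htr
  intro a c h
  rw [Algebra.algebraMap_eq_smul_one, ← hb0, ← hb1] at h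
  have h0 := congrArg (fun x => b.repr x 0) h
  have h1 := congrArg (fun x => b.repr x 1) h
  simp [b.repr_self, Finsupp.single_apply] at h0 h1
  exact ⟨h0, h1⟩

lemma aux_span (hquad : Module.finrank F E = 2)
    (τ : E) (hτ : τ ≠ 0) (htr : Algebra.trace F E τ = 0) :
    ∀ e : E, ∃ a c : F, e = algebraMap F E a + c • τ := by
  obtain ⟨b, hb0, hb1⟩ := aux_basis hquad τ hτ htr
  intro e
  refine ⟨b.repr e 0, b.repr e 1, ?_⟩
  have := b.sum_repr e
  rw [Fin.sum_univ_two, hb0, hb1] at this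
  rw [Algebra.algebraMap_eq_smul_one]; exact this.symm

lemma aux_inF (hquad : Module.finrank F E = 2)
    (τ : E) (hτ : τ ≠ 0) (htr : Algebra.trace F E τ = 0)
    (e : E) (h : Algebra.trace F E (τ * e) = 0) :
    ∃ a : F, e = algebraMap F E a := by
  obtain ⟨c, hc, hcsq⟩ := aux_tausq hquad τ hτ htr
  obtain ⟨a, d, rfl⟩ := aux_span hquad τ hτ htr e
  refine ⟨a, ?_⟩
  have hτe : τ * (algebraMap F E a + d • τ) = a • τ + algebraMap F E (d * c) := by
    simp only [mul_add, mul_smul_comm, hcsq, Algebra.smul_def, map_mul]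
    ring_nf
    rw [sq, hcsq]
    ring
  rw [hτe] at h
  rw [map_add, map_smul, htr, smul_zero, zero_add, Algebra.trace_algebraMap, hquad] at h
  have : d * c = 0 := by simpa using h
  have hd : d = 0 := by
    rcases mul_eq_zero.mp this with h' | h'
    · exact h'
    · exact absurd h' hc
  rw [hd, zero_smul, add_zero]

end Aux

section Main

variable {F E V : Type*} [Field F] [Field E] [Algebra F E] [CharZero F]
  [AddCommGroup V] [Module E V] [Module F V] [IsScalarTower F E V]
  [FiniteDimensional E V]

theorem stmt4_aux
    (hquad : Module.finrank F E = 2)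
    (τ : E) (hτ : τ ≠ 0) (htr : Algebra.trace F E τ = 0)
    (q : LinearMap.BilinForm E V) (hsymm : q.IsSymm) (hnd : q.Nondegenerate)
    (L : Submodule F V)
    (hiso : ∀ x ∈ L, ∀ y ∈ L, Algebra.trace F E (τ * q x y) = 0)
    (hdim : 2 * Module.finrank F L = Module.finrank F V)
    (Lan : Submodule E V)
    (hLan : (Lan : Set V) = {x | x ∈ L ∧ ∀ y ∈ L, q x y = 0})
    (Lra : Submodule F V)
    (hcompl₁ : Lan.restrictScalars F ⊓ Lra = ⊥)
    (hcompl₂ : Lan.restrictScalars F ⊔ Lra = L)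
    (k : ℕ) (hk : k = Module.finrank E Lan) :
    (LinearMap.range ((Lra.subtype).liftBaseChange E) = Submodule.span E (Lra : Set V) ∧
      Function.Injective ((Lra.subtype).liftBaseChange E) ∧
      (∀ x ∈ Submodule.span E (Lra : Set V),
        (∀ y ∈ Submodule.span E (Lra : Set V), q x y = 0) → x = 0)) ∧
    (Module.finrank E (Submodule.span E (L : Set V)) = Module.finrank E V - k ∧
      Module.finrank E (Submodule.span E (Lra : Set V)) = Module.finrank E V - 2 * k) ∧
    ((∀ x ∈ Lan, ∀ y ∈ Lan, q x y = 0) ∧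
      Lan ≤ LinearMap.BilinForm.orthogonal q (Submodule.span E (Lra : Set V)) ∧
      2 * k = Module.finrank E
        (LinearMap.BilinForm.orthogonal q (Submodule.span E (Lra : Set V)))) := by
  haveI : FiniteDimensional F E := finite_of_finrank_eq_succ hquad
  haveI : FiniteDimensional F V := Module.Finite.trans E V
  obtain ⟨c, hc, hcsq⟩ := aux_tausq hquad τ hτ htr
  have hindep := aux_indep hquad τ hτ htr
  have hspanE := aux_span hquad τ hτ htr
  have hinF : ∀ x ∈ L, ∀ y ∈ L, ∃ a : F, q x y = algebraMap F E a :=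
    fun x hx y hy => aux_inF hquad τ hτ htr _ (hiso x hx y hy)
  have hmemLan : ∀ x : V, x ∈ Lan ↔ (x ∈ L ∧ ∀ y ∈ L, q x y = 0) := by
    intro x
    constructor
    · intro h; exact (Set.ext_iff.mp hLan x).mp h
    · intro h; exact (Set.ext_iff.mp hLan x).mpr h
  -- the multiplication-by-τ map
  set Tl : V →ₗ[F] V := ((LinearMap.lsmul E V τ).restrictScalars F) with hTl
  have hTlapp : ∀ x : V, Tl x = τ • x := fun x => rfl
  have hTlinj : Function.Injective Tl := by
    intro x y h
    simp only [hTlapp] at h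
    exact smul_right_injective V hτ h
  -- intersection L ⊓ τL = Lan
  have hinter : L ⊓ L.map Tl = Lan.restrictScalars F := by
    apply le_antisymm
    · rintro x ⟨hxL, hxτ⟩
      obtain ⟨y, hyL, hyx⟩ := hxτ
      rw [Submodule.restrictScalars_mem, hmemLan]
      refine ⟨hxL, fun z hz => ?_⟩
      obtain ⟨a, ha⟩ := hinF x hxL z hz
      obtain ⟨b, hb⟩ := hinF y hyL z hz
      have hq : q x z = τ * q y z := by
        rw [← hyx, hTlapp, map_smul]
        rfl
      rw [ha, hb] at hq
      have : algebraMap F E a + (-b) • τ = 0 := by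
        rw [neg_smul, Algebra.smul_def, mul_comm]
        rw [hq]; ring
      obtain ⟨ha0, -⟩ := hindep _ _ this
      rw [ha, ha0, map_zero]
    · intro x hx
      rw [Submodule.restrictScalars_mem] at hx
      have hxL : x ∈ L := ((hmemLan x).mp hx).1
      refine ⟨hxL, ⟨τ⁻¹ • x, ?_, ?_⟩⟩
      · have : τ⁻¹ • x ∈ Lan := Lan.smul_mem τ⁻¹ hx
        exact ((hmemLan _).mp this).1
      · rw [hTlapp, smul_smul, mul_inv_cancel₀ hτ, one_smul]
  -- closure of M ⊔ τM under τ
  have hTsub : ∀ (M : Submodule F V), ∀ x ∈ M ⊔ M.map Tl, τ • x ∈ M ⊔ M.map Tl := by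
    intro M x hx
    obtain ⟨y, hy, z, hz, rfl⟩ := Submodule.mem_sup.mp hx
    obtain ⟨w, hw, rfl⟩ := hz
    have h1 : τ • Tl w = c • w := by
      rw [hTlapp, smul_smul, hcsq, algebraMap_smul]
    rw [smul_add, h1]
    exact add_mem (Submodule.mem_sup_right ⟨y, hy, rfl⟩)
      (Submodule.mem_sup_left (M.smul_mem c hw))
  -- span description
  have spanEq : ∀ M : Submodule F V,
      (Submodule.span E (M : Set V)).restrictScalars F = M ⊔ M.map Tl := by
    intro M
    apply le_antisymm
    · intro x hx
      rw [Submodule.restrictScalars_mem] at hx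
      induction hx using Submodule.span_induction with
      | mem x hxM => exact Submodule.mem_sup_left hxM
      | zero => exact zero_mem _
      | add x y _ _ hx hy => exact add_mem hx hy
      | smul e x _ hx =>
        obtain ⟨a, b, rfl⟩ := hspanE e
        have : (algebraMap F E a + b • τ) • x = a • x + b • (τ • x) := by
          rw [add_smul, algebraMap_smul, smul_assoc]
        rw [this]
        exact add_mem (Submodule.smul_mem _ a hx) (Submodule.smul_mem _ b (hTsub M x hx))
    · rw [sup_le_iff]
      constructor
      · intro x hx
        exact Submodule.subset_span hx
      · rintro x ⟨y, hy, rfl⟩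
        rw [Submodule.restrictScalars_mem, hTlapp]
        exact Submodule.smul_mem _ τ (Submodule.subset_span hy)
  -- basic numerology
  set n : ℕ := Module.finrank E V with hn
  have hfV : Module.finrank F V = 2 * n := by
    rw [← finrank_mul_finrank F E V, hquad]
  have hfL : Module.finrank F L = n := by omega
  have hfLan : Module.finrank F (Lan.restrictScalars F) = 2 * k := by
    rw [((Submodule.restrictScalarsEquiv F E V Lan).restrictScalars F).finrank_eq, hk,
      ← hquad, finrank_mul_finrank]
  have hτrank : ∀ M : Submodule F V, Module.finrank F (M.map Tl) = Module.finrank F M :=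
    fun M => (Submodule.equivMapOfInjective Tl hTlinj M).finrank_eq.symm
  have hLanle : Lan.restrictScalars F ≤ L := by
    intro x hx
    exact ((hmemLan x).mp hx).1
  have h2kn : 2 * k ≤ n := by
    have := Submodule.finrank_mono (t := L) hLanle
    omega
  have hfLra : Module.finrank F Lra = n - 2 * k := by
    have := Submodule.finrank_sup_add_finrank_inf_eq (Lan.restrictScalars F) Lra
    rw [hcompl₁, hcompl₂, hfLan, hfL] at this
    simp only [finrank_bot] at this
    omega
  have hLraL : Lra ≤ L := by
    rw [← hcompl₂]; exact le_sup_right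
  -- halving
  have hhalf : ∀ W : Submodule E V,
      2 * Module.finrank E W = Module.finrank F (W.restrictScalars F) := by
    intro W
    rw [((Submodule.restrictScalarsEquiv F E V W).restrictScalars F).finrank_eq,
      ← hquad, finrank_mul_finrank]
  -- dim of span of L
  have hspanLdim : Module.finrank E (Submodule.span E (L : Set V)) = n - k := by
    have h1 := hhalf (Submodule.span E (L : Set V))
    rw [spanEq L] at h1
    have h2 := Submodule.finrank_sup_add_finrank_inf_eq L (L.map Tl)
    rw [hinter, hτrank L, hfLan, hfL] at h2
    omega
  -- Lra ⊓ τ Lra = ⊥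
  have hinterra : Lra ⊓ Lra.map Tl = ⊥ := by
    rw [eq_bot_iff]
    rintro x ⟨hx1, hx2⟩
    have hxL : x ∈ L ⊓ L.map Tl := by
      refine ⟨hLraL hx1, ?_⟩
      obtain ⟨y, hy, rfl⟩ := hx2
      exact ⟨y, hLraL hy, rfl⟩
    rw [hinter] at hxL
    have : x ∈ Lan.restrictScalars F ⊓ Lra := ⟨hxL, hx1⟩
    rw [hcompl₁] at this
    exact this
  have hspanRadim : Module.finrank E (Submodule.span E (Lra : Set V)) = n - 2 * k := by
    have h1 := hhalf (Submodule.span E (Lra : Set V))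
    rw [spanEq Lra] at h1
    have h2 := Submodule.finrank_sup_add_finrank_inf_eq Lra (Lra.map Tl)
    rw [hinterra, hτrank Lra, hfLra] at h2
    simp only [finrank_bot] at h2
    omega
  -- (a) range
  have hrange : LinearMap.range ((Lra.subtype).liftBaseChange E)
      = Submodule.span E (Lra : Set V) := by
    apply le_antisymm
    · rintro x ⟨t, rfl⟩
      induction t with
      | zero => simp
      | tmul e m =>
        rw [LinearMap.liftBaseChange_tmul]
        exact Submodule.smul_mem _ e (Submodule.subset_span m.2)
      | add s t hs ht => rw [map_add]; exact add_mem hs ht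
    · rw [Submodule.span_le]
      intro x hx
      exact ⟨(1 : E) ⊗ₜ ⟨x, hx⟩, by simp [LinearMap.liftBaseChange_tmul]⟩
  -- (a) injectivity
  have hinj : Function.Injective ((Lra.subtype).liftBaseChange E) := by
    rw [← LinearMap.ker_eq_bot]
    haveI : Module.Finite F Lra := inferInstance
    have hdom : Module.finrank E (TensorProduct F E Lra) = n - 2 * k := by
      rw [finrank_baseChange, hfLra]
    have hrn := LinearMap.finrank_range_add_finrank_ker ((Lra.subtype).liftBaseChange E)
    rw [hdom, hrange, hspanRadim] at hrn
    have : Module.finrank E (LinearMap.ker ((Lra.subtype).liftBaseChange E)) = 0 := by omega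
    exact Submodule.finrank_eq_zero.mp this
  -- membership in the span of Lra
  have hmemspan : ∀ x : V, x ∈ Submodule.span E (Lra : Set V) ↔
      ∃ u ∈ Lra, ∃ v ∈ Lra, x = u + τ • v := by
    intro x
    constructor
    · intro hx
      have : x ∈ Lra ⊔ Lra.map Tl := by
        rw [← spanEq Lra]; exact hx
      obtain ⟨u, hu, z, hz, rfl⟩ := Submodule.mem_sup.mp this
      obtain ⟨v, hv, rfl⟩ := hz
      exact ⟨u, hu, v, hv, rfl⟩
    · rintro ⟨u, hu, v, hv, rfl⟩
      exact add_mem (Submodule.subset_span hu)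
        (Submodule.smul_mem _ τ (Submodule.subset_span hv))
  -- vanishing criterion
  have hzero : ∀ w ∈ Lra, (∀ y ∈ Lra, q w y = 0) → w = 0 := by
    intro w hw hq
    have hwLan : w ∈ Lan := by
      rw [hmemLan]
      refine ⟨hLraL hw, fun z hz => ?_⟩
      rw [← hcompl₂] at hz
      obtain ⟨z1, hz1, z2, hz2, rfl⟩ := Submodule.mem_sup.mp hz
      rw [map_add, hq z2 hz2, add_zero]
      have hsy : q w z1 = q z1 w := by
        have := hsymm.eq z1 w
        simpa using this.symm
      rw [hsy]
      rw [Submodule.restrictScalars_mem, hmemLan] at hz1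
      exact hz1.2 w (hLraL hw)
    have : w ∈ Lan.restrictScalars F ⊓ Lra := ⟨hwLan, hw⟩
    rw [hcompl₁] at this
    exact this
  -- pairing values on Lra decompositions
  have hpair : ∀ u ∈ Lra, ∀ v ∈ Lra, ∀ y ∈ L,
      q (u + τ • v) y = 0 → q u y = 0 ∧ q v y = 0 := by
    intro u hu v hv y hy hq0
    obtain ⟨a, ha⟩ := hinF u (hLraL hu) y hy
    obtain ⟨b, hb⟩ := hinF v (hLraL hv) y hy
    have hexp : q (u + τ • v) y = q u y + τ * q v y := by
      rw [map_add, map_smul]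
      rfl
    rw [hexp, ha, hb] at hq0
    have : algebraMap F E a + b • τ = 0 := by
      rw [Algebra.smul_def, mul_comm]; exact hq0
    obtain ⟨ha0, hb0⟩ := hindep _ _ this
    rw [ha, hb, ha0, hb0, map_zero]
    exact ⟨rfl, rfl⟩
  -- (a) nondegeneracy on the span
  have hndspan : ∀ x ∈ Submodule.span E (Lra : Set V),
      (∀ y ∈ Submodule.span E (Lra : Set V), q x y = 0) → x = 0 := by
    intro x hx hq
    obtain ⟨u, hu, v, hv, rfl⟩ := (hmemspan x).mp hx
    have hqy : ∀ y ∈ Lra, q u y = 0 ∧ q v y = 0 := by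
      intro y hy
      exact hpair u hu v hv y (hLraL hy)
        (hq y (Submodule.subset_span hy))
    have hu0 : u = 0 := hzero u hu (fun y hy => (hqy y hy).1)
    have hv0 : v = 0 := hzero v hv (fun y hy => (hqy y hy).2)
    rw [hu0, hv0, smul_zero, add_zero]
  -- (c) parts
  have hc1 : ∀ x ∈ Lan, ∀ y ∈ Lan, q x y = 0 := by
    intro x hx y hy
    exact ((hmemLan x).mp hx).2 y ((hmemLan y).mp hy).1
  have hc2 : Lan ≤ LinearMap.BilinForm.orthogonal q (Submodule.span E (Lra : Set V)) := by
    intro z hz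
    rw [LinearMap.BilinForm.mem_orthogonal_iff]
    intro x hx
    obtain ⟨u, hu, v, hv, rfl⟩ := (hmemspan x).mp hx
    have hqu : q u z = 0 := by
      have h1 : q z u = 0 := ((hmemLan z).mp hz).2 u (hLraL hu)
      have := hsymm.eq z u
      simpa [h1] using this.symm
    have hqv : q v z = 0 := by
      have h1 : q z v = 0 := ((hmemLan z).mp hz).2 v (hLraL hv)
      have := hsymm.eq z v
      simpa [h1] using this.symm
    show q (u + τ • v) z = 0
    rw [map_add, map_smul, LinearMap.add_apply, LinearMap.smul_apply, hqu, hqv,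
      smul_zero, add_zero]
  have hc3 : 2 * k = Module.finrank E
      (LinearMap.BilinForm.orthogonal q (Submodule.span E (Lra : Set V))) := by
    have horth := LinearMap.BilinForm.finrank_add_finrank_orthogonal hsymm.isRefl
      (Submodule.span E (Lra : Set V))
    have htop : LinearMap.BilinForm.orthogonal q ⊤ = ⊥ := by
      rw [eq_bot_iff]
      intro x hx
      rw [LinearMap.BilinForm.mem_orthogonal_iff] at hx
      have : x = 0 := by
        apply hnd.1
        intro y
        have h1 : q y x = 0 := hx y Submodule.mem_top
        have := hsymm.eq y x
        simpa [h1] using this.symm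
      simp [this]
    rw [htop, inf_bot_eq] at horth
    simp only [finrank_bot, add_zero] at horth
    rw [hspanRadim] at horth
    omega
  exact ⟨⟨hrange, hinj, hndspan⟩, ⟨hspanLdim, hspanRadim⟩, hc1, hc2, hc3⟩

end Main

/-- Let `L` be a Lagrangian of `𝐕_τ`, written `L = L_an ⊕ L_ra` for an
`F`-complement `L_ra` of the radical `L_an` (an `E`-subspace).  With `k = dim_E L_an`:
(a) the `E`-span of `L_ra` is a nondegenerate quadratic `E`-subspace isomorphic to
`E ⊗_F L_ra`; (b) `dim_E (E·L) = dim_E V − k` and `dim_E (E·L_ra) = dim_E V − 2k`;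
(c) `L_an` is a Lagrangian of the orthogonal complement `(E·L_ra)^⊥` in `V`. -/
theorem stmt4
    (F E V : Type*) [Field F] [Field E] [Algebra F E] [CharZero F]
    (hquad : Module.finrank F E = 2)
    (τ : E) (hτ : τ ≠ 0) (htr : Algebra.trace F E τ = 0)
    [AddCommGroup V] [Module E V] [Module F V] [IsScalarTower F E V]
    [FiniteDimensional E V]
    (q : LinearMap.BilinForm E V) (hsymm : q.IsSymm) (hnd : q.Nondegenerate)
    (L : Submodule F V)
    (hiso : ∀ x ∈ L, ∀ y ∈ L, Algebra.trace F E (τ * q x y) = 0)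
    (hdim : 2 * Module.finrank F L = Module.finrank F V)
    (Lan : Submodule E V)
    (hLan : (Lan : Set V) = {x | x ∈ L ∧ ∀ y ∈ L, q x y = 0})
    (Lra : Submodule F V)
    (hcompl₁ : Lan.restrictScalars F ⊓ Lra = ⊥)
    (hcompl₂ : Lan.restrictScalars F ⊔ Lra = L)
    (k : ℕ) (hk : k = Module.finrank E Lan) :
    -- (a) E·L_ra ≅ E ⊗_F L_ra and it is nondegenerate
    (LinearMap.range ((Lra.subtype).liftBaseChange E) = Submodule.span E (Lra : Set V) ∧
      Function.Injective ((Lra.subtype).liftBaseChange E) ∧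
      (∀ x ∈ Submodule.span E (Lra : Set V),
        (∀ y ∈ Submodule.span E (Lra : Set V), q x y = 0) → x = 0)) ∧
    -- (b) dimension formulas
    (Module.finrank E (Submodule.span E (L : Set V)) = Module.finrank E V - k ∧
      Module.finrank E (Submodule.span E (Lra : Set V)) = Module.finrank E V - 2 * k) ∧
    -- (c) L_an is a Lagrangian of (E·L_ra)^⊥
    ((∀ x ∈ Lan, ∀ y ∈ Lan, q x y = 0) ∧
      Lan ≤ LinearMap.BilinForm.orthogonal q (Submodule.span E (Lra : Set V)) ∧
      2 * k = Module.finrank E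
        (LinearMap.BilinForm.orthogonal q (Submodule.span E (Lra : Set V)))) := by
  exact stmt4_aux hquad τ hτ htr q hsymm hnd L hiso hdim Lan hLan Lra hcompl₁ hcompl₂ k hk
end

section
/- Let L be a Lagrangian of 𝐕_τ with L_an = {0}. Then the stabilizer of L in O(V) equals O(L), the orthogonal group of the F-quadratic space L, embedded in O(V) via the isometry L ⊗_F E ≅ V. -/
open Module

/-- Let `L` be a Lagrangian of `𝐕_τ` with `L_an = {0}`, so that `q` is
`F`-valued on `L` and `L ⊗_F E ≅ V`.  Then the stabilizer of `L` in `O(V)` equals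
`O(L)`: every `q`-isometry of `V` stabilizing `L` restricts to an isometry of the
`F`-quadratic space `L`, and conversely every isometry of `L` extends (via
`L ⊗_F E ≅ V`) to a `q`-isometry of `V` stabilizing `L`. -/
theorem stmt7
    (F E V : Type*) [Field F] [Field E] [Algebra F E] [CharZero F]
    (hquad : Module.finrank F E = 2)
    (τ : E) (hτ : τ ≠ 0) (htr : Algebra.trace F E τ = 0)
    [AddCommGroup V] [Module E V] [Module F V] [IsScalarTower F E V]
    [FiniteDimensional E V]
    (q : LinearMap.BilinForm E V) (hsymm : q.IsSymm) (hnd : q.Nondegenerate)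
    (L : Submodule F V)
    (hiso : ∀ x ∈ L, ∀ y ∈ L, Algebra.trace F E (τ * q x y) = 0)
    (hdim : 2 * Module.finrank F L = Module.finrank F V)
    (han : ∀ x ∈ L, (∀ y ∈ L, q x y = 0) → x = 0) :
    (∀ g : V ≃ₗ[E] V, (∀ x y : V, q (g x) (g y) = q x y) →
      L.map (LinearMap.restrictScalars F (g : V →ₗ[E] V)) = L →
      ∃ h : ↥L ≃ₗ[F] ↥L, (∀ x y : ↥L, q (h x : V) (h y : V) = q (x : V) (y : V)) ∧
        ∀ x : ↥L, g (x : V) = (h x : V)) ∧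
    (∀ h : ↥L ≃ₗ[F] ↥L, (∀ x y : ↥L, q (h x : V) (h y : V) = q (x : V) (y : V)) →
      ∃ g : V ≃ₗ[E] V, (∀ x y : V, q (g x) (g y) = q x y) ∧
        L.map (LinearMap.restrictScalars F (g : V →ₗ[E] V)) = L ∧
        ∀ x : ↥L, g (x : V) = (h x : V)) := by
  classical
  constructor
  · -- Part 1: restriction
    intro g hg hmap
    have hmap' : L.map ((g.restrictScalars F : V ≃ₗ[F] V) : V →ₗ[F] V) = L := hmap
    refine ⟨((g.restrictScalars F).submoduleMap L).trans (LinearEquiv.ofEq _ _ hmap'), ?_, ?_⟩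
    · intro x y
      have hx : ((((g.restrictScalars F).submoduleMap L).trans (LinearEquiv.ofEq _ _ hmap')) x : V) = g (x : V) := rfl
      have hy : ((((g.restrictScalars F).submoduleMap L).trans (LinearEquiv.ofEq _ _ hmap')) y : V) = g (y : V) := rfl
      rw [hx, hy, hg]
    · intro x; rfl
  · -- Part 2: extension
    intro h hh
    have hFE : FiniteDimensional F E := FiniteDimensional.of_finrank_pos (by omega)
    have hFV : FiniteDimensional F V := Module.Finite.trans E V
    have htrnd := traceForm_nondegenerate F E
    -- 1, τ linearly independent over F
    have hτF : ∀ a : F, algebraMap F E a = τ → a = 0 ∧ τ = 0 := by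
      intro a ha
      have h2 : Algebra.trace F E (algebraMap F E a) = (finrank F E) • a := Algebra.trace_algebraMap a
      rw [ha, htr, hquad] at h2
      have ha0 : a = 0 := by
        have : (2 : ℕ) • a = 0 := h2.symm
        simpa using this
      exact ⟨ha0, by rw [← ha, ha0, map_zero]⟩
    have hli : LinearIndependent F ![(1 : E), τ] := by
      rw [LinearIndependent.pair_iff]
      intro s t hst
      by_cases ht : t = 0
      · subst ht
        simp only [zero_smul, add_zero, smul_eq_mul, mul_one] at hst
        have : algebraMap F E s = 0 := by
          rw [Algebra.algebraMap_eq_smul_one]; exact hst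
        exact ⟨(algebraMap F E).injective (by simpa using this), rfl⟩
      · exfalso
        have htE : algebraMap F E t ≠ 0 := fun h0 => ht ((algebraMap F E).injective (by simpa using h0))
        have hst' : algebraMap F E s + algebraMap F E t * τ = 0 := by
          rw [Algebra.algebraMap_eq_smul_one]
          rw [show algebraMap F E t * τ = t • τ from (Algebra.smul_def t τ).symm]
          exact hst
        have hτval : algebraMap F E (-s / t) = τ := by
          rw [map_div₀, map_neg, div_eq_iff htE]
          linear_combination -hst'
        obtain ⟨_, hτ0⟩ := hτF _ hτval
        exact hτ hτ0
    let bE : Basis (Fin 2) F E := basisOfLinearIndependentOfCardEqFinrank hli (by simp [hquad])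
    have hbE : ∀ i, bE i = ![(1 : E), τ] i := fun i => by
      simp [bE, coe_basisOfLinearIndependentOfCardEqFinrank]
    -- trace key
    have htrkey : ∀ e : E, Algebra.trace F E (τ * e) = 0 →
        Algebra.trace F E (τ * τ * e) = 0 → e = 0 := by
      intro e h1 h2
      apply htrnd.1 e
      intro y
      have hy : y = bE.repr y 0 • (1 : E) + bE.repr y 1 • τ := by
        have := bE.sum_repr y
        rw [Fin.sum_univ_two, hbE 0, hbE 1] at this
        simpa using this.symm
      show Algebra.trace F E (e * y) = 0
      clear hy
      set a := bE.repr (y / τ) 0 with ha_def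
      set b := bE.repr (y / τ) 1 with hb_def
      have hs : algebraMap F E a + algebraMap F E b * τ = y / τ := by
        have hs := bE.sum_repr (y / τ)
        rw [Fin.sum_univ_two, hbE 0, hbE 1] at hs
        simp only [Matrix.cons_val_zero, Matrix.cons_val_one, Matrix.head_cons] at hs
        rw [← hs, Algebra.smul_def, Algebra.smul_def, mul_one]
      have hy2 : y = algebraMap F E a * τ + algebraMap F E b * (τ * τ) := by
        have h3 := congrArg (· * τ) hs
        rw [div_mul_cancel₀ y hτ] at h3
        linear_combination -h3
      rw [hy2, mul_add, map_add,
        show e * (algebraMap F E a * τ) = a • (τ * e) by rw [Algebra.smul_def]; ring,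
        show e * (algebraMap F E b * (τ * τ)) = b • (τ * τ * e) by rw [Algebra.smul_def]; ring,
        map_smul, map_smul, h1, h2, smul_zero, smul_zero, add_zero]
    -- anisotropy of L ∩ τL
    have hA : ∀ x : V, x ∈ L → τ • x ∈ L → x = 0 := by
      intro x hx hτx
      apply han x hx
      intro y hy
      apply htrkey
      · exact hiso x hx y hy
      · have h2 := hiso (τ • x) hτx y hy
        rw [map_smul, LinearMap.smul_apply, smul_eq_mul] at h2
        rw [mul_assoc]
        exact h2
    -- any F-linearly independent family in L is E-linearly independent in V
    have hkey : ∀ c : Fin (finrank F L) → L, LinearIndependent F c →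
        LinearIndependent E (fun i => (c i : V)) := by
      intro c hc
      rw [Fintype.linearIndependent_iff] at hc ⊢
      intro gE hg
      set a : Fin (finrank F L) → F := fun i => bE.repr (gE i) 0 with ha_def
      set b : Fin (finrank F L) → F := fun i => bE.repr (gE i) 1 with hb_def
      have hdec : ∀ i, gE i = algebraMap F E (a i) + algebraMap F E (b i) * τ := by
        intro i
        have hs := bE.sum_repr (gE i)
        rw [Fin.sum_univ_two, hbE 0, hbE 1] at hs
        simp only [Matrix.cons_val_zero, Matrix.cons_val_one, Matrix.head_cons] at hs
        rw [← hs, Algebra.smul_def, Algebra.smul_def, mul_one]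
      set x : L := ∑ i, a i • c i with hx_def
      set y : L := ∑ i, b i • c i with hy_def
      have hxV : (x : V) = ∑ i, a i • (c i : V) := by
        rw [hx_def]
        exact (map_sum L.subtype _ _).trans (by simp)
      have hyV : (y : V) = ∑ i, b i • (c i : V) := by
        rw [hy_def]
        exact (map_sum L.subtype _ _).trans (by simp)
      have key : ∑ i, gE i • (c i : V) = (x : V) + τ • (y : V) := by
        rw [hxV, hyV, Finset.smul_sum, ← Finset.sum_add_distrib]
        apply Finset.sum_congr rfl
        intro i _
        rw [hdec i, add_smul, algebraMap_smul,
          show τ • (b i • (c i : V)) = τ • (algebraMap F E (b i) • (c i : V)) by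
            rw [algebraMap_smul],
          smul_smul, mul_comm τ]
      have hxy : (x : V) + τ • (y : V) = 0 := key.symm.trans hg
      have hy0 : (y : V) = 0 := by
        have hmem : τ • (y : V) ∈ L := by
          rw [show τ • (y : V) = -(x : V) from by linear_combination (norm := module) hxy]
          exact L.neg_mem x.2
        exact hA (y : V) y.2 hmem
      have hx0 : (x : V) = 0 := by rw [hy0, smul_zero, add_zero] at hxy; exact hxy
      have ha0 : ∀ i, a i = 0 := hc a (by rw [← hx_def]; exact Subtype.ext hx0)
      have hb0 : ∀ i, b i = 0 := hc b (by rw [← hy_def]; exact Subtype.ext hy0)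
      intro i
      rw [hdec i, ha0 i, hb0 i]; simp
    -- a basis of L over F gives bases of V over E
    have hmrank : finrank F L = finrank E V := by
      have h1 : finrank F E * finrank E V = finrank F V := finrank_mul_finrank F E V
      rw [hquad] at h1
      omega
    set bL : Basis (Fin (finrank F L)) F L := finBasis F L with hbL_def
    have hcard : Fintype.card (Fin (finrank F L)) = finrank E V := by simpa using hmrank
    have li1 : LinearIndependent E (fun i => (bL i : V)) := hkey bL bL.linearIndependent
    have li2 : LinearIndependent E (fun i => ((bL.map h) i : V)) :=
      hkey (bL.map h) (bL.map h).linearIndependent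
    let bV : Basis (Fin (finrank F L)) E V :=
      Basis.mk li1 (li1.span_eq_top_of_card_eq_finrank' hcard).ge
    let bV' : Basis (Fin (finrank F L)) E V :=
      Basis.mk li2 (li2.span_eq_top_of_card_eq_finrank' hcard).ge
    have hbV : ∀ i, bV i = (bL i : V) := fun i => by simp [bV]
    have hbV' : ∀ i, bV' i = (h (bL i) : V) := fun i => by simp [bV', Basis.map_apply]
    let g : V ≃ₗ[E] V := bV.equiv bV' (Equiv.refl _)
    have hgb : ∀ i, g (bV i) = bV' i := fun i => by simp [g, Basis.equiv_apply]
    have hgL : ∀ i, g ((bL i : V)) = (h (bL i) : V) := fun i => by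
      rw [← hbV i, hgb i, hbV' i]
    have hLspan : Submodule.span F (Set.range (fun i => (bL i : V))) = L := by
      rw [show (Set.range fun i => (bL i : V)) = L.subtype '' Set.range bL from by
        rw [← Set.range_comp]; rfl]
      rw [← Submodule.map_span, bL.span_eq, Submodule.map_top, Submodule.range_subtype]
    have hLspan' : Submodule.span F (Set.range (fun i => ((h (bL i)) : V))) = L := by
      rw [show (Set.range fun i => ((h (bL i)) : V)) = L.subtype '' Set.range (bL.map h) from by
        rw [← Set.range_comp]; funext; rfl]
      rw [← Submodule.map_span, (bL.map h).span_eq, Submodule.map_top, Submodule.range_subtype]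
    refine ⟨g, ?_, ?_, ?_⟩
    · -- isometry
      have heq : q.compl₁₂ (g : V →ₗ[E] V) (g : V →ₗ[E] V) = q := by
        apply LinearMap.ext_basis bV bV
        intro i j
        rw [LinearMap.compl₁₂_apply]
        simp only [LinearEquiv.coe_coe]
        rw [hbV i, hbV j, hgL i, hgL j, hh]
      intro x y
      have := LinearMap.congr_fun₂ heq x y
      rw [LinearMap.compl₁₂_apply] at this
      exact this
    · -- stabilizes L
      conv_lhs => rw [← hLspan]
      rw [Submodule.map_span, ← Set.range_comp]
      rw [show ((LinearMap.restrictScalars F (g : V →ₗ[E] V)) ∘ fun i => (bL i : V)) =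
          fun i => ((h (bL i)) : V) from by
        funext i
        simp only [Function.comp_apply, LinearMap.restrictScalars_apply, LinearEquiv.coe_coe]
        exact hgL i]
      exact hLspan'
    · -- agrees with h on L
      intro x
      have heq2 : (LinearMap.restrictScalars F ((g : V →ₗ[E] V))).comp L.subtype =
          L.subtype.comp (h : L →ₗ[F] L) := by
        apply Basis.ext bL
        intro i
        simp only [LinearMap.comp_apply, LinearMap.restrictScalars_apply,
          Submodule.coe_subtype, LinearEquiv.coe_coe]
        exact hgL i
      have := LinearMap.congr_fun heq2 x
      simpa using this
end

section
/- Let L be a Lagrangian of 𝐕_τ with L_an ≠ {0}, let P = Stab_{O(V)}(L_an) (a proper parabolic subgroup of O(V)) with unipotent radical N = {g ∈ O(V) : g|_{L_an} = id and g induces the identity on L_an^⊥/L_an}. Then N is contained in Stab_{O(V)}(L), and N is normal in Stab_{O(V)}(L). -/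
open Module

/-- Let `L` be a Lagrangian of `𝐕_τ` with radical `L_an ≠ 0`, and let `N` be
the unipotent radical of the parabolic `P = Stab_{O(V)}(L_an)`, i.e. the set of
`q`-isometries acting as the identity on `L_an` and on `L_an^⊥/L_an`.  Then `N` is
contained in `Stab_{O(V)}(L)` and is normal in it. -/
theorem stmt8
    (F E V : Type*) [Field F] [Field E] [Algebra F E] [CharZero F]
    (hquad : Module.finrank F E = 2)
    (τ : E) (hτ : τ ≠ 0) (htr : Algebra.trace F E τ = 0)
    [AddCommGroup V] [Module E V] [Module F V] [IsScalarTower F E V]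
    [FiniteDimensional E V]
    (q : LinearMap.BilinForm E V) (hsymm : q.IsSymm) (hnd : q.Nondegenerate)
    (L : Submodule F V)
    (hiso : ∀ x ∈ L, ∀ y ∈ L, Algebra.trace F E (τ * q x y) = 0)
    (hdim : 2 * Module.finrank F L = Module.finrank F V)
    (Lan : Submodule E V)
    (hLan : (Lan : Set V) = {x | x ∈ L ∧ ∀ y ∈ L, q x y = 0})
    (hne : Lan ≠ ⊥)
    (InStab InN : (V ≃ₗ[E] V) → Prop)
    (hStab : ∀ g, InStab g ↔ (∀ x y : V, q (g x) (g y) = q x y) ∧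
      L.map (LinearMap.restrictScalars F (g : V →ₗ[E] V)) = L)
    (hInN : ∀ g, InN g ↔ (∀ x y : V, q (g x) (g y) = q x y) ∧
      (∀ x ∈ Lan, g x = x) ∧
      (∀ x ∈ LinearMap.BilinForm.orthogonal q Lan, g x - x ∈ Lan)) :
    (∀ g, InN g → InStab g) ∧
      (∀ g u, InStab g → InN u → InN ((g.symm.trans u).trans g)) := by
  -- Every element of `L` is `q`-orthogonal to `Lan`.
  have hLsub : ∀ x ∈ L, x ∈ LinearMap.BilinForm.orthogonal q Lan := by
    intro x hx z hz
    have hz' : z ∈ (Lan : Set V) := hz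
    rw [hLan] at hz'
    exact hz'.2 x hx
  -- Elements of `Lan` lie in `L`.
  have hLanL : ∀ z ∈ Lan, z ∈ L := by
    intro z hz
    have hz' : z ∈ (Lan : Set V) := hz
    rw [hLan] at hz'
    exact hz'.1
  constructor
  · -- N ⊆ Stab(L)
    intro g hg
    rw [hInN] at hg
    obtain ⟨hgQ, hfix, hmod⟩ := hg
    -- the inverse also fixes Lan pointwise
    have hfix' : ∀ x ∈ Lan, g.symm x = x := by
      intro x hx
      conv_lhs => rw [← hfix x hx]
      exact g.symm_apply_apply x
    -- the inverse also acts as identity modulo Lan on the orthogonal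
    have hmod' : ∀ x ∈ LinearMap.BilinForm.orthogonal q Lan, g.symm x - x ∈ Lan := by
      intro x hx
      have hgsx : g.symm x ∈ LinearMap.BilinForm.orthogonal q Lan := by
        intro z hz
        have h1 := hgQ z (g.symm x)
        rw [hfix z hz, g.apply_symm_apply] at h1
        have h2 : q z x = 0 := hx z hz
        show q z (g.symm x) = 0
        rw [← h1, h2]
      have h3 := hmod (g.symm x) hgsx
      rw [g.apply_symm_apply] at h3
      have := Lan.neg_mem h3
      simpa [neg_sub] using this
    rw [hStab]
    refine ⟨hgQ, ?_⟩
    apply le_antisymm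
    · rintro x ⟨y, hy, rfl⟩
      have h1 : g y - y ∈ Lan := hmod y (hLsub y hy)
      have h2 := L.add_mem (hLanL _ h1) hy
      simpa using h2
    · intro y hy
      refine ⟨g.symm y, ?_, ?_⟩
      · have h1 : g.symm y - y ∈ Lan := hmod' y (hLsub y hy)
        have h2 := L.add_mem (hLanL _ h1) hy
        simpa using h2
      · simp
  · -- normality
    intro g u hgS huN
    rw [hStab] at hgS
    obtain ⟨hgQ, hgL⟩ := hgS
    rw [hInN] at huN
    obtain ⟨huQ, hufix, humod⟩ := huN
    -- g maps L into L and g.symm maps L into L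
    have hgLmem : ∀ x ∈ L, g x ∈ L := by
      intro x hx
      have : g x ∈ L.map (LinearMap.restrictScalars F (g : V →ₗ[E] V)) := ⟨x, hx, rfl⟩
      rwa [hgL] at this
    have hgsLmem : ∀ x ∈ L, g.symm x ∈ L := by
      intro x hx
      rw [← hgL] at hx
      obtain ⟨y, hy, rfl⟩ := hx
      simpa using hy
    -- g maps Lan into Lan
    have hgLan : ∀ z ∈ Lan, g z ∈ Lan := by
      intro z hz
      have hz' : z ∈ (Lan : Set V) := hz
      rw [hLan] at hz'
      show g z ∈ (Lan : Set V)
      rw [hLan]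
      refine ⟨hgLmem z hz'.1, ?_⟩
      intro y hy
      have h1 := hgQ z (g.symm y)
      rw [g.apply_symm_apply] at h1
      rw [h1]
      exact hz'.2 _ (hgsLmem y hy)
    have hgsLan : ∀ z ∈ Lan, g.symm z ∈ Lan := by
      intro z hz
      have hz' : z ∈ (Lan : Set V) := hz
      rw [hLan] at hz'
      show g.symm z ∈ (Lan : Set V)
      rw [hLan]
      refine ⟨hgsLmem z hz'.1, ?_⟩
      intro y hy
      have h1 := hgQ (g.symm z) y
      rw [g.apply_symm_apply] at h1
      rw [← h1]
      exact hz'.2 _ (hgLmem y hy)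
    rw [hInN]
    refine ⟨?_, ?_, ?_⟩
    · intro x y
      simp only [LinearEquiv.trans_apply]
      rw [hgQ, huQ, ← g.apply_symm_apply x, ← g.apply_symm_apply y, hgQ,
        g.symm_apply_apply, g.symm_apply_apply]
    · intro x hx
      simp only [LinearEquiv.trans_apply]
      rw [hufix _ (hgsLan x hx), g.apply_symm_apply]
    · intro x hx
      simp only [LinearEquiv.trans_apply]
      have hgsx : g.symm x ∈ LinearMap.BilinForm.orthogonal q Lan := by
        intro z hz
        have h1 := hgQ z (g.symm x)
        rw [g.apply_symm_apply] at h1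
        show q z (g.symm x) = 0
        rw [← h1]
        exact hx _ (hgLan z hz)
      have h2 := humod _ hgsx
      have h3 := hgLan _ h2
      rw [map_sub, g.apply_symm_apply] at h3
      exact h3
end

section
/- Let W_F = X_F ⊕ Y_F be a polarized symplectic F-space of dimension 2n with dual bases e₁,…,eₙ of X_F and e₁',…,eₙ' of Y_F, and let W = W_F ⊗_F E, 𝐖 = Res_{E/F}(W) with form tr_{E/F}(⟨-,-⟩_W). For 0 ≤ k ≤ n let X_k = E e₁ ⊕ ⋯ ⊕ E e_k, X'_{F,n−k} = F e_{k+1} ⊕ ⋯ ⊕ F eₙ, Y'_{F,n−k} = F e'_{k+1} ⊕ ⋯ ⊕ F e'ₙ, and L_k := X_k ⊕ X'_{F,n−k} ⊕ τ Y'_{F,n−k}. Then L_k is a Lagrangian of 𝐖 and its radical L_{k,an} = {x ∈ L_k : ⟨x, L_k⟩_W = 0} equals X_k. -/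
open Module

/-- A pi-submodule over `univ` is linearly equivalent to the product of the submodules. -/
def piSubEquiv {R ι : Type*} [Semiring R] {φ : ι → Type*} [∀ i, AddCommMonoid (φ i)]
    [∀ i, Module R (φ i)] (p : ∀ i, Submodule R (φ i)) :
    (Submodule.pi Set.univ p) ≃ₗ[R] (∀ i, p i) where
  toFun x := fun i => ⟨x.1 i, x.2 i (Set.mem_univ i)⟩
  map_add' _ _ := rfl
  map_smul' _ _ := rfl
  invFun f := ⟨fun i => f i, fun i _ => (f i).2⟩
  left_inv _ := rfl
  right_inv _ := rfl

/-- A product submodule is linearly equivalent to the product of the submodules. -/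
def prodSubEquiv {R M N : Type*} [Semiring R] [AddCommMonoid M] [AddCommMonoid N]
    [Module R M] [Module R N] (p : Submodule R M) (q : Submodule R N) :
    (p.prod q) ≃ₗ[R] p × q where
  toFun x := (⟨x.1.1, x.2.1⟩, ⟨x.1.2, x.2.2⟩)
  map_add' _ _ := rfl
  map_smul' _ _ := rfl
  invFun x := ⟨(x.1.1, x.2.1), ⟨x.1.2, x.2.2⟩⟩
  left_inv _ := rfl
  right_inv _ := rfl

lemma sum_ite_lt (k n : ℕ) : ∑ i ∈ Finset.range n, (if i < k then 2 else 1) = n + min n k := by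
  induction n with
  | zero => simp
  | succ n ih =>
    rw [Finset.sum_range_succ, ih]
    by_cases h : n < k
    · simp only [if_pos h]; omega
    · simp only [if_neg h]; omega

lemma sum_ite_lt' (k n : ℕ) : ∑ i ∈ Finset.range n, (if i < k then 0 else 1) = n - min n k := by
  induction n with
  | zero => simp
  | succ n ih =>
    rw [Finset.sum_range_succ, ih]
    by_cases h : n < k
    · simp only [if_pos h]; omega
    · simp only [if_neg h]; omega

set_option maxHeartbeats 1000000 in
/-- In the doubled symplectic space `𝐖 = Res_{E/F}(W)`,
`W = E^n × E^n` with form `⟨(x,x'),(y,y')⟩ = ∑ xᵢ y'ᵢ − x'ᵢ yᵢ` and doubled form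
`tr_{E/F}∘⟨-,-⟩`, the subspace `L_k = X_k ⊕ X'_{F,n−k} ⊕ τ Y'_{F,n−k}` is an
`F`-Lagrangian of `𝐖` whose radical `{x ∈ L_k : ⟨x, L_k⟩ = 0}` equals `X_k`. -/
theorem stmt10
    (F E : Type*) [Field F] [Field E] [Algebra F E] [CharZero F]
    (hquad : Module.finrank F E = 2)
    (τ : E) (hτ : τ ≠ 0) (htr : Algebra.trace F E τ = 0)
    (n k : ℕ) (hk : k ≤ n)
    (ω : ((Fin n → E) × (Fin n → E)) → ((Fin n → E) × (Fin n → E)) → E)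
    (hω : ∀ p r, ω p r = ∑ i : Fin n, (p.1 i * r.2 i - p.2 i * r.1 i))
    (Lk : Set ((Fin n → E) × (Fin n → E)))
    (hLk : Lk = {p | (∀ i : Fin n, (i : ℕ) < k → p.2 i = 0) ∧
      ∀ i : Fin n, k ≤ (i : ℕ) →
        ((∃ a : F, p.1 i = algebraMap F E a) ∧ (∃ b : F, p.2 i = τ * algebraMap F E b))}) :
    -- L_k is an F-subspace
    ((0 : (Fin n → E) × (Fin n → E)) ∈ Lk ∧
      (∀ p ∈ Lk, ∀ r ∈ Lk, p + r ∈ Lk) ∧ (∀ (a : F), ∀ p ∈ Lk, a • p ∈ Lk)) ∧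
    -- L_k is totally isotropic for the doubled form tr ∘ ω
    (∀ p ∈ Lk, ∀ r ∈ Lk, Algebra.trace F E (ω p r) = 0) ∧
    -- L_k has half the F-dimension of 𝐖, i.e. it is a Lagrangian
    (2 * Module.finrank F (Submodule.span F Lk) =
      Module.finrank F ((Fin n → E) × (Fin n → E))) ∧
    -- the radical of ω restricted to L_k is X_k
    ({p ∈ Lk | ∀ r ∈ Lk, ω p r = 0} =
      {p | (∀ i : Fin n, k ≤ (i : ℕ) → p.1 i = 0) ∧ p.2 = 0}) := by
  have hFE : FiniteDimensional F E := Module.finite_of_finrank_eq_succ hquad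
  subst hLk
  refine ⟨⟨?_, ?_, ?_⟩, ?_, ?_, ?_⟩
  · -- zero
    exact ⟨fun i _ => rfl, fun i _ => ⟨⟨0, by simp⟩, ⟨0, by simp⟩⟩⟩
  · -- add
    rintro p ⟨hp1, hp2⟩ r ⟨hr1, hr2⟩
    refine ⟨fun i hi => ?_, fun i hi => ?_⟩
    · show p.2 i + r.2 i = 0
      rw [hp1 i hi, hr1 i hi, add_zero]
    · obtain ⟨⟨a, ha⟩, ⟨b, hb⟩⟩ := hp2 i hi
      obtain ⟨⟨a', ha'⟩, ⟨b', hb'⟩⟩ := hr2 i hi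
      constructor
      · exact ⟨a + a', by show p.1 i + r.1 i = _; rw [ha, ha', map_add]⟩
      · exact ⟨b + b', by show p.2 i + r.2 i = _; rw [hb, hb', map_add]; ring⟩
  · -- smul
    rintro c p ⟨hp1, hp2⟩
    refine ⟨fun i hi => ?_, fun i hi => ?_⟩
    · show c • p.2 i = 0
      rw [hp1 i hi, smul_zero]
    · obtain ⟨⟨a, ha⟩, ⟨b, hb⟩⟩ := hp2 i hi
      constructor
      · exact ⟨c * a, by show c • p.1 i = _; rw [ha, Algebra.smul_def, ← map_mul]⟩
      · refine ⟨c * b, ?_⟩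
        show c • p.2 i = _
        rw [hb, Algebra.smul_def, map_mul]; ring
  · -- isotropic
    rintro p ⟨hp1, hp2⟩ r ⟨hr1, hr2⟩
    rw [hω, map_sum]
    refine Finset.sum_eq_zero fun i _ => ?_
    by_cases hi : (i : ℕ) < k
    · rw [hp1 i hi, hr1 i hi, mul_zero, zero_mul, sub_zero, map_zero]
    · obtain ⟨⟨a, ha⟩, ⟨b, hb⟩⟩ := hp2 i (le_of_not_gt hi)
      obtain ⟨⟨a', ha'⟩, ⟨b', hb'⟩⟩ := hr2 i (le_of_not_gt hi)
      have : p.1 i * r.2 i - p.2 i * r.1 i = (a * b' - b * a') • τ := by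
        rw [ha, hb, ha', hb', Algebra.smul_def, map_sub, map_mul, map_mul]; ring
      rw [this, map_smul, htr, smul_zero]
  · -- dimension
    set p1 : Fin n → Submodule F E := fun i =>
      if (i : ℕ) < k then (⊤ : Submodule F E) else LinearMap.range (Algebra.linearMap F E)
      with hp1def
    set p2 : Fin n → Submodule F E := fun i =>
      if (i : ℕ) < k then (⊥ : Submodule F E) else Submodule.span F {τ}
      with hp2def
    set M : Submodule F ((Fin n → E) × (Fin n → E)) :=
      (Submodule.pi Set.univ p1).prod (Submodule.pi Set.univ p2) with hMdef
    have hset : {p : (Fin n → E) × (Fin n → E) | (∀ i : Fin n, (i : ℕ) < k → p.2 i = 0) ∧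
        ∀ i : Fin n, k ≤ (i : ℕ) →
          ((∃ a : F, p.1 i = algebraMap F E a) ∧ (∃ b : F, p.2 i = τ * algebraMap F E b))} =
        (M : Set _) := by
      ext p
      simp only [Set.mem_setOf_eq, SetLike.mem_coe, hMdef, Submodule.mem_prod,
        Submodule.mem_pi, Set.mem_univ, forall_true_left, hp1def, hp2def]
      constructor
      · rintro ⟨h1, h2⟩
        constructor
        · intro i
          by_cases hi : (i : ℕ) < k
          · rw [if_pos hi]; trivial
          · rw [if_neg hi]
            obtain ⟨⟨a, ha⟩, _⟩ := h2 i (le_of_not_gt hi)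
            exact ⟨a, ha.symm⟩
        · intro i
          by_cases hi : (i : ℕ) < k
          · rw [if_pos hi]; simpa using h1 i hi
          · rw [if_neg hi]
            obtain ⟨_, ⟨b, hb⟩⟩ := h2 i (le_of_not_gt hi)
            rw [Submodule.mem_span_singleton]
            exact ⟨b, by rw [hb, Algebra.smul_def]; ring⟩
      · rintro ⟨h1, h2⟩
        constructor
        · intro i hi
          have := h2 i
          rw [if_pos hi] at this
          simpa using this
        · intro i hi
          have h1' := h1 i
          have h2' := h2 i
          rw [if_neg (not_lt.2 hi)] at h1' h2'
          obtain ⟨a, ha⟩ := h1'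
          rw [Submodule.mem_span_singleton] at h2'
          obtain ⟨b, hb⟩ := h2'
          refine ⟨⟨a, ha.symm⟩, ⟨b, ?_⟩⟩
          rw [← hb, Algebra.smul_def]; ring
    rw [hset, Submodule.span_eq]
    have e1 : finrank F M = finrank F (Submodule.pi Set.univ p1) +
        finrank F (Submodule.pi Set.univ p2) := by
      rw [(prodSubEquiv _ _).finrank_eq, finrank_prod]
    have halg : Function.Injective (Algebra.linearMap F E) := by
      intro a b hab
      exact (algebraMap F E).injective hab
    have d1 : ∀ i, finrank F (p1 i) = if (i : ℕ) < k then 2 else 1 := by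
      intro i
      by_cases hi : (i : ℕ) < k
      · have h : p1 i = ⊤ := by simp [hp1def, hi]
        rw [h, if_pos hi, finrank_top, hquad]
      · have h : p1 i = LinearMap.range (Algebra.linearMap F E) := by simp [hp1def, hi]
        rw [h, if_neg hi, LinearMap.finrank_range_of_inj halg, finrank_self]
    have d2 : ∀ i, finrank F (p2 i) = if (i : ℕ) < k then 0 else 1 := by
      intro i
      by_cases hi : (i : ℕ) < k
      · have h : p2 i = ⊥ := by simp [hp2def, hi]
        rw [h, if_pos hi, finrank_bot]
      · have h : p2 i = Submodule.span F {τ} := by simp [hp2def, hi]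
        rw [h, if_neg hi]
        exact finrank_span_singleton hτ
    have f1 : finrank F (Submodule.pi Set.univ p1) = n + k := by
      rw [(piSubEquiv p1).finrank_eq, Module.finrank_pi_fintype]
      simp only [d1]
      rw [Fin.sum_univ_eq_sum_range (fun i => if i < k then 2 else 1), sum_ite_lt,
        min_eq_right hk]
    have f2 : finrank F (Submodule.pi Set.univ p2) = n - k := by
      rw [(piSubEquiv p2).finrank_eq, Module.finrank_pi_fintype]
      simp only [d2]
      rw [Fin.sum_univ_eq_sum_range (fun i => if i < k then 0 else 1), sum_ite_lt',
        min_eq_right hk]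
    have ftot : finrank F ((Fin n → E) × (Fin n → E)) = 4 * n := by
      rw [finrank_prod, Module.finrank_pi_fintype]
      simp [hquad]; ring
    rw [e1, f1, f2, ftot]
    omega
  · -- radical
    ext p
    simp only [Set.mem_setOf_eq, Set.mem_sep_iff]
    constructor
    · rintro ⟨⟨hp1, hp2⟩, hrad⟩
      have hA : ∀ i : Fin n, k ≤ (i : ℕ) → p.1 i = 0 := by
        intro i hi
        set r : (Fin n → E) × (Fin n → E) :=
          (0, fun j => if j = i then τ else 0) with hrdef
        have hrL : r ∈ {p : (Fin n → E) × (Fin n → E) |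
            (∀ i : Fin n, (i : ℕ) < k → p.2 i = 0) ∧
            ∀ i : Fin n, k ≤ (i : ℕ) →
              ((∃ a : F, p.1 i = algebraMap F E a) ∧
                (∃ b : F, p.2 i = τ * algebraMap F E b))} := by
          refine ⟨fun j hj => ?_, fun j hj => ⟨⟨0, by simp [hrdef]⟩, ?_⟩⟩
          · show (if j = i then τ else 0) = 0
            rw [if_neg (by rintro rfl; omega)]
          · refine ⟨if j = i then 1 else 0, ?_⟩
            show (if j = i then τ else 0) = _
            by_cases h : j = i <;> simp [h]
        have := hrad r hrL
        rw [hω] at this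
        simp only [hrdef, Pi.zero_apply, mul_zero, sub_zero] at this
        have hsum : ∑ j : Fin n, p.1 j * (if j = i then τ else 0) = p.1 i * τ := by
          rw [Finset.sum_eq_single i]
          · rw [if_pos rfl]
          · intro j _ hj; rw [if_neg hj, mul_zero]
          · intro h; exact absurd (Finset.mem_univ i) h
        rw [hsum] at this
        rcases mul_eq_zero.1 this with h | h
        · exact h
        · exact absurd h hτ
      have hB : ∀ i : Fin n, k ≤ (i : ℕ) → p.2 i = 0 := by
        intro i hi
        set r : (Fin n → E) × (Fin n → E) :=
          ((fun j => if j = i then 1 else 0), 0) with hrdef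
        have hrL : r ∈ {p : (Fin n → E) × (Fin n → E) |
            (∀ i : Fin n, (i : ℕ) < k → p.2 i = 0) ∧
            ∀ i : Fin n, k ≤ (i : ℕ) →
              ((∃ a : F, p.1 i = algebraMap F E a) ∧
                (∃ b : F, p.2 i = τ * algebraMap F E b))} := by
          refine ⟨fun j hj => rfl, fun j hj => ⟨?_, ⟨0, by simp [hrdef]⟩⟩⟩
          refine ⟨if j = i then 1 else 0, ?_⟩
          show (if j = i then (1 : E) else 0) = _
          by_cases h : j = i <;> simp [h]
        have := hrad r hrL
        rw [hω] at this
        simp only [hrdef, Pi.zero_apply, mul_zero, zero_sub] at this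
        have hsum : ∑ j : Fin n, -(p.2 j * (if j = i then 1 else 0)) = -(p.2 i) := by
          rw [Finset.sum_eq_single i]
          · rw [if_pos rfl, mul_one]
          · intro j _ hj; rw [if_neg hj, mul_zero, neg_zero]
          · intro h; exact absurd (Finset.mem_univ i) h
        rw [hsum, neg_eq_zero] at this
        exact this
      refine ⟨hA, funext fun i => ?_⟩
      by_cases hi : (i : ℕ) < k
      · exact hp1 i hi
      · exact hB i (le_of_not_gt hi)
    · rintro ⟨h1, h2⟩
      have hp2 : ∀ i, p.2 i = 0 := fun i => by rw [h2]; rfl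
      refine ⟨⟨fun i _ => hp2 i, fun i hi => ⟨⟨0, by rw [h1 i hi, map_zero]⟩,
        ⟨0, by rw [hp2 i, map_zero, mul_zero]⟩⟩⟩, fun r ⟨hr1, hr2⟩ => ?_⟩
      rw [hω]
      refine Finset.sum_eq_zero fun i _ => ?_
      rw [hp2 i, zero_mul, sub_zero]
      by_cases hi : (i : ℕ) < k
      · rw [hr1 i hi, mul_zero]
      · rw [h1 i (le_of_not_gt hi), zero_mul]
end

section
/- Let V be a nondegenerate quadratic E-space of dimension 2m with Witt index r, containing a maximal isotropic E-subspace with basis e₁,…,e_r and dual basis e₁',…,e_r'. With L_k := (E e₁ ⊕ ⋯ ⊕ E e_k) ⊕ τ V_{2m−2k,F} as in the paper, the stabilizer of L_k in O(V) equals (GL(X_k) × O(V_{2m−2k,F})) ⋉ N, where X_k = E e₁ ⊕ ⋯ ⊕ E e_k, N is the unipotent radical of the parabolic Stab_{O(V)}(X_k), and V_{2m−2k,F} is the indicated F-rational subspace. -/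
set_option maxHeartbeats 4000000


open Module

/-- For the quadratic `E`-space `V` of dimension `2m` with isotropic
`E`-subspace `X_k` (with dual isotropic `Y_k`) and rational subspace `V_{2m−2k,F}`, the
stabilizer in `O(V)` of the Lagrangian `L_k = X_k ⊕ τ V_{2m−2k,F}` of `𝐕_τ` equals
`(GL(X_k) × O(V_{2m−2k,F})) ⋉ N`: an isometry `g` of `V` stabilizes `L_k` iff `g = m·u`
with `u` in the unipotent radical `N` of `Stab_{O(V)}(X_k)` and `m` a Levi element
stabilizing `X_k`, `Y_k`, `V_{2m−2k} = E·V_{2m−2k,F}` and the rational form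
`V_{2m−2k,F}`. -/
theorem stmt12
    (F E V : Type*) [Field F] [Field E] [Algebra F E] [CharZero F]
    (hquad : Module.finrank F E = 2)
    (τ : E) (hτ : τ ≠ 0) (htr : Algebra.trace F E τ = 0)
    [AddCommGroup V] [Module E V] [Module F V] [IsScalarTower F E V]
    [FiniteDimensional E V] (m k : ℕ) (hdV : Module.finrank E V = 2 * m)
    (q : LinearMap.BilinForm E V) (hsymm : q.IsSymm) (hnd : q.Nondegenerate)
    (Xk Yk : Submodule E V) (VF : Submodule F V)
    (hXkiso : ∀ x ∈ Xk, ∀ y ∈ Xk, q x y = 0)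
    (hYkiso : ∀ x ∈ Yk, ∀ y ∈ Yk, q x y = 0)
    (hdXk : Module.finrank E Xk = k) (hdYk : Module.finrank E Yk = k)
    (horthX : ∀ x ∈ Xk, ∀ v ∈ VF, q x v = 0)
    (horthY : ∀ y ∈ Yk, ∀ v ∈ VF, q y v = 0)
    (hdecomp : Xk ⊔ Submodule.span E (VF : Set V) ⊔ Yk = ⊤)
    (Lk : Set V)
    (hLk : Lk = {w : V | ∃ x ∈ Xk, ∃ v ∈ VF, w = x + τ • v})
    (hlag₁ : ∀ x ∈ Lk, ∀ y ∈ Lk, Algebra.trace F E (τ * q x y) = 0)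
    (hlag₂ : 2 * Module.finrank F (Submodule.span F Lk) = Module.finrank F V)
    (hrad : {x : V | x ∈ Submodule.span F Lk ∧ ∀ y ∈ Lk, q x y = 0} = (Xk : Set V)) :
    ∀ g : V ≃ₗ[E] V, (∀ x y : V, q (g x) (g y) = q x y) →
      (((∀ x ∈ Submodule.span F Lk, g x ∈ Submodule.span F Lk) ∧
          (∀ x ∈ Submodule.span F Lk, g.symm x ∈ Submodule.span F Lk)) ↔
        ∃ mg u : V ≃ₗ[E] V,
          (∀ x y : V, q (mg x) (mg y) = q x y) ∧ (∀ x y : V, q (u x) (u y) = q x y) ∧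
          (∀ x : V, g x = mg (u x)) ∧
          -- mg lies in the Levi subgroup GL(X_k) × O(V_{2m-2k,F})
          ((∀ x ∈ Xk, mg x ∈ Xk) ∧ (∀ y ∈ Yk, mg y ∈ Yk) ∧
            (∀ w ∈ Submodule.span E (VF : Set V), mg w ∈ Submodule.span E (VF : Set V)) ∧
            (∀ v ∈ VF, mg v ∈ VF)) ∧
          -- u lies in the unipotent radical N of Stab_{O(V)}(X_k)
          ((∀ x ∈ Xk, u x = x) ∧
            (∀ w : V, (∀ x ∈ Xk, q w x = 0) → u w - w ∈ Xk))) := by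
  intro g hg
  classical
  haveI : FiniteDimensional F E := FiniteDimensional.of_finrank_pos (by rw [hquad]; norm_num)
  haveI : FiniteDimensional F V := Module.Finite.trans E V
  set W : Submodule E V := Submodule.span E (VF : Set V) with hW
  -- basic orthogonality, extended to W
  have hVFW : (VF : Set V) ⊆ (W : Set V) := Submodule.subset_span
  have hXW : ∀ x ∈ Xk, ∀ w ∈ W, q x w = 0 := by
    intro x hx w hw
    have : W ≤ LinearMap.ker (q x) := Submodule.span_le.mpr (fun v hv => horthX x hx v hv)
    exact this hw
  have hYW : ∀ y ∈ Yk, ∀ w ∈ W, q y w = 0 := by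
    intro y hy w hw
    have : W ≤ LinearMap.ker (q y) := Submodule.span_le.mpr (fun v hv => horthY y hy v hv)
    exact this hw
  have hWX : ∀ w ∈ W, ∀ x ∈ Xk, q w x = 0 := fun w hw x hx => by
    rw [← hsymm.eq x w]; exact hXW x hx w hw
  have hWY : ∀ w ∈ W, ∀ y ∈ Yk, q w y = 0 := fun w hw y hy => by
    rw [← hsymm.eq y w]; exact hYW y hy w hw
  -- every vector decomposes
  have hdec : ∀ v : V, ∃ x ∈ Xk, ∃ w ∈ W, ∃ y ∈ Yk, v = x + w + y := by
    intro v
    have hv : v ∈ Xk ⊔ W ⊔ Yk := by rw [hdecomp]; trivial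
    obtain ⟨a, ha, y, hy, hay⟩ := Submodule.mem_sup.mp hv
    obtain ⟨x, hx, w, hw, hxw⟩ := Submodule.mem_sup.mp ha
    exact ⟨x, hx, w, hw, y, hy, by rw [← hay, ← hxw]⟩
  -- vanishing of a triple summing to zero
  have hzero : ∀ x ∈ Xk, ∀ w ∈ W, ∀ y ∈ Yk, x + w + y = 0 →
      x = 0 ∧ w = 0 ∧ y = 0 := by
    intro x hx w hw y hy hsum
    have hy0 : y = 0 := by
      apply hnd.1
      intro t
      obtain ⟨x', hx', w', hw', y', hy', ht⟩ := hdec t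
      have hyx' : q y x' = 0 := by
        rw [← hsymm.eq x' y]
        have : q x' (x + w + y) = 0 := by rw [hsum]; simp
        rw [map_add, map_add, hXkiso x' hx' x hx, hXW x' hx' w hw] at this
        simpa using this
      rw [ht, map_add, map_add, hyx', hYW y hy w' hw', hYkiso y hy y' hy']
      simp
    have hx0 : x = 0 := by
      apply hnd.1
      intro t
      obtain ⟨x', hx', w', hw', y', hy', ht⟩ := hdec t
      have hxw : x = -w := by
        have := hsum
        rw [hy0, add_zero] at this
        linear_combination (norm := abel) this
      have hxy' : q x y' = 0 := by
        rw [hxw, map_neg, LinearMap.neg_apply, hWY w hw y' hy', neg_zero]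
      rw [ht, map_add, map_add, hXkiso x hx x' hx', hXW x hx w' hw', hxy']
      simp
    refine ⟨hx0, ?_, hy0⟩
    rw [hx0, hy0, zero_add, add_zero] at hsum
    exact hsum
  -- the three submodules are complementary; build projections
  have hcX : IsCompl Xk (W ⊔ Yk) := by
    constructor
    · rw [disjoint_iff]
      ext z
      simp only [Submodule.mem_inf, Submodule.mem_bot]
      constructor
      · rintro ⟨hz1, hz2⟩
        obtain ⟨w, hw, y, hy, hwy⟩ := Submodule.mem_sup.mp hz2
        have := hzero (-z) (neg_mem hz1) w hw y hy (by rw [← hwy]; abel)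
        have : z = 0 := by have := this.1; simpa [neg_eq_zero] using this
        exact this
      · rintro rfl; exact ⟨Submodule.zero_mem _, Submodule.zero_mem _⟩
    · rw [codisjoint_iff, ← sup_assoc, hdecomp]
  have hcW : IsCompl W (Xk ⊔ Yk) := by
    constructor
    · rw [disjoint_iff]
      ext z
      simp only [Submodule.mem_inf, Submodule.mem_bot]
      constructor
      · rintro ⟨hz1, hz2⟩
        obtain ⟨x, hx, y, hy, hxy⟩ := Submodule.mem_sup.mp hz2
        have h0 := hzero x hx (-z) (neg_mem hz1) y hy (by rw [← hxy]; abel)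
        have : z = 0 := by have := h0.2.1; simpa [neg_eq_zero] using this
        exact this
      · rintro rfl; exact ⟨Submodule.zero_mem _, Submodule.zero_mem _⟩
    · rw [codisjoint_iff]
      rw [show W ⊔ (Xk ⊔ Yk) = Xk ⊔ W ⊔ Yk by rw [← sup_assoc, sup_comm W Xk], hdecomp]
  have hcY : IsCompl Yk (Xk ⊔ W) := by
    constructor
    · rw [disjoint_iff]
      ext z
      simp only [Submodule.mem_inf, Submodule.mem_bot]
      constructor
      · rintro ⟨hz1, hz2⟩
        obtain ⟨x, hx, w, hw, hxw⟩ := Submodule.mem_sup.mp hz2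
        have h0 := hzero x hx w hw (-z) (neg_mem hz1) (by rw [← hxw]; abel)
        have : z = 0 := by have := h0.2.2; simpa [neg_eq_zero] using this
        exact this
      · rintro rfl; exact ⟨Submodule.zero_mem _, Submodule.zero_mem _⟩
    · rw [codisjoint_iff, sup_comm, hdecomp]
  set πX : V →ₗ[E] Xk := Xk.projectionOnto _ hcX with hπX
  set πW : V →ₗ[E] W := W.projectionOnto _ hcW with hπW
  set πY : V →ₗ[E] Yk := Yk.projectionOnto _ hcY with hπY
  set pX : V →ₗ[E] V := Xk.subtype ∘ₗ πX with hpX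
  set pW : V →ₗ[E] V := W.subtype ∘ₗ πW with hpW
  set pY : V →ₗ[E] V := Yk.subtype ∘ₗ πY with hpY
  -- values of the projections on a decomposition
  have hproj : ∀ x ∈ Xk, ∀ w ∈ W, ∀ y ∈ Yk,
      pX (x + w + y) = x ∧ pW (x + w + y) = w ∧ pY (x + w + y) = y := by
    intro x hx w hw y hy
    refine ⟨?_, ?_, ?_⟩
    · have : x + w + y = (⟨x, hx⟩ : Xk) + (⟨w + y, Submodule.mem_sup.mpr ⟨w, hw, y, hy, rfl⟩⟩ : (W ⊔ Yk : Submodule E V)) := by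
        simp [add_assoc]
      rw [hpX, LinearMap.comp_apply, this, map_add,
        Submodule.projectionOnto_apply_left,
        Submodule.projectionOnto_apply_right]
      simp
    · have : x + w + y = (⟨w, hw⟩ : W) + (⟨x + y, Submodule.mem_sup.mpr ⟨x, hx, y, hy, rfl⟩⟩ : (Xk ⊔ Yk : Submodule E V)) := by
        simp; abel
      rw [hpW, LinearMap.comp_apply, this, map_add,
        Submodule.projectionOnto_apply_left,
        Submodule.projectionOnto_apply_right]
      simp
    · have : x + w + y = (⟨y, hy⟩ : Yk) + (⟨x + w, Submodule.mem_sup.mpr ⟨x, hx, w, hw, rfl⟩⟩ : (Xk ⊔ W : Submodule E V)) := by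
        simp; abel
      rw [hpY, LinearMap.comp_apply, this, map_add,
        Submodule.projectionOnto_apply_left,
        Submodule.projectionOnto_apply_right]
      simp
  have hsum : ∀ v : V, pX v + pW v + pY v = v := by
    intro v
    obtain ⟨x, hx, w, hw, y, hy, rfl⟩ := hdec v
    obtain ⟨h1, h2, h3⟩ := hproj x hx w hw y hy
    rw [h1, h2, h3]
  have hpXmem : ∀ v, pX v ∈ Xk := fun v => (πX v).2
  have hpWmem : ∀ v, pW v ∈ W := fun v => (πW v).2
  have hpYmem : ∀ v, pY v ∈ Yk := fun v => (πY v).2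
  -- membership in the F-span of Lk
  have hXsub : ∀ x ∈ Xk, x ∈ Submodule.span F Lk := by
    intro x hx
    have : x ∈ {x : V | x ∈ Submodule.span F Lk ∧ ∀ y ∈ Lk, q x y = 0} := by
      rw [hrad]; exact hx
    exact this.1
  have hspanc : ∀ z : V, z ∈ Submodule.span F Lk ↔ ∃ x ∈ Xk, ∃ v ∈ VF, z = x + τ • v := by
    have hsub : Submodule.span F Lk =
        Xk.restrictScalars F ⊔ VF.map ((LinearMap.lsmul E V τ).restrictScalars F) := by
      apply le_antisymm
      · apply Submodule.span_le.mpr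
        intro z hz
        rw [hLk] at hz
        obtain ⟨x, hx, v, hv, rfl⟩ := hz
        exact Submodule.add_mem _
          (Submodule.mem_sup_left (by simpa using hx))
          (Submodule.mem_sup_right ⟨v, hv, rfl⟩)
      · apply sup_le
        · intro x hx
          exact hXsub x (by simpa using hx)
        · rintro z ⟨v, hv, rfl⟩
          apply Submodule.subset_span
          rw [hLk]
          exact ⟨0, Submodule.zero_mem _, v, hv, by simp⟩
    intro z
    rw [hsub]
    constructor
    · intro hz
      obtain ⟨x, hx, w, hw, hxw⟩ := Submodule.mem_sup.mp hz
      obtain ⟨v, hv, rfl⟩ := hw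
      exact ⟨x, by simpa using hx, v, hv, by rw [← hxw]; rfl⟩
    · rintro ⟨x, hx, v, hv, rfl⟩
      exact Submodule.add_mem _ (Submodule.mem_sup_left (by simpa using hx))
        (Submodule.mem_sup_right ⟨v, hv, rfl⟩)
  have hVperpX : ∀ v ∈ VF, ∀ x ∈ Xk, q v x = 0 := fun v hv x hx => by
    rw [← hsymm.eq x v]; exact horthX x hx v hv
  constructor
  · -- forward direction
    rintro ⟨hstab, hstab'⟩
    have hxkill : ∀ x ∈ Xk, ∀ z ∈ Submodule.span F Lk, q x z = 0 := by
      intro x hx z hz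
      have hx' : x ∈ {x : V | x ∈ Submodule.span F Lk ∧ ∀ y ∈ Lk, q x y = 0} := by
        rw [hrad]; exact hx
      have hker : Submodule.span F Lk ≤ LinearMap.ker ((q x).restrictScalars F) :=
        Submodule.span_le.mpr (fun y hy => by simpa using hx'.2 y hy)
      simpa using hker hz
    have hgX : ∀ x ∈ Xk, g x ∈ Xk := by
      intro x hx
      have hx' : x ∈ {x : V | x ∈ Submodule.span F Lk ∧ ∀ y ∈ Lk, q x y = 0} := by
        rw [hrad]; exact hx
      have hmem : g x ∈ Submodule.span F Lk := hstab x hx'.1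
      have hperp0 : ∀ y ∈ Lk, q (g x) y = 0 := by
        intro y hy
        have h1 : g.symm y ∈ Submodule.span F Lk := hstab' y (Submodule.subset_span hy)
        calc q (g x) y = q (g x) (g (g.symm y)) := by rw [g.apply_symm_apply]
          _ = q x (g.symm y) := hg _ _
          _ = 0 := hxkill x hx _ h1
      have : g x ∈ {x : V | x ∈ Submodule.span F Lk ∧ ∀ y ∈ Lk, q x y = 0} :=
        ⟨hmem, hperp0⟩
      rw [hrad] at this; exact this
    have hgsX : ∀ x ∈ Xk, g.symm x ∈ Xk := by
      intro x hx
      have hx' : x ∈ {x : V | x ∈ Submodule.span F Lk ∧ ∀ y ∈ Lk, q x y = 0} := by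
        rw [hrad]; exact hx
      have hmem : g.symm x ∈ Submodule.span F Lk := hstab' x hx'.1
      have hperp0 : ∀ y ∈ Lk, q (g.symm x) y = 0 := by
        intro y hy
        have h1 : g y ∈ Submodule.span F Lk := hstab y (Submodule.subset_span hy)
        calc q (g.symm x) y = q (g (g.symm x)) (g y) := (hg _ _).symm
          _ = q x (g y) := by rw [g.apply_symm_apply]
          _ = 0 := hxkill x hx _ h1
      have : g.symm x ∈ {x : V | x ∈ Submodule.span F Lk ∧ ∀ y ∈ Lk, q x y = 0} :=
        ⟨hmem, hperp0⟩
      rw [hrad] at this; exact this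
    -- vectors orthogonal to Xk have no Yk-component
    have hperp : ∀ z : V, (∀ x ∈ Xk, q z x = 0) → pY z = 0 := by
      intro z hzp
      obtain ⟨x, hx, w, hw, y, hy, rfl⟩ := hdec z
      rw [(hproj x hx w hw y hy).2.2]
      have hy0 : y = 0 := by
        apply hnd.1
        intro t
        obtain ⟨x', hx', w', hw', y', hy', rfl⟩ := hdec t
        have hyx' : q y x' = 0 := by
          have h1 := hzp x' hx'
          rw [map_add, map_add, LinearMap.add_apply, LinearMap.add_apply,
            hXkiso x hx x' hx', hWX w hw x' hx'] at h1
          simpa using h1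
        rw [map_add, map_add, hyx', hYW y hy w' hw', hYkiso y hy y' hy']
        simp
      exact hy0
    -- g maps W into Xk ⊕ W
    have hgWperp : ∀ w ∈ W, ∀ x ∈ Xk, q (g w) x = 0 := by
      intro w hw x hx
      calc q (g w) x = q (g w) (g (g.symm x)) := by rw [g.apply_symm_apply]
        _ = q w (g.symm x) := hg _ _
        _ = 0 := hWX w hw _ (hgsX x hx)
    have hgWdec : ∀ w ∈ W, g w = pX (g w) + pW (g w) := by
      intro w hw
      have h0 : pY (g w) = 0 := hperp _ (hgWperp w hw)
      have h1 := hsum (g w)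
      rw [h0, add_zero] at h1
      exact h1.symm
    -- the action of g on the rational form
    have hgVF : ∀ v ∈ VF, ∃ x ∈ Xk, ∃ v' ∈ VF, g v = x + v' := by
      intro v hv
      have h1 : τ • v ∈ Submodule.span F Lk := by
        apply Submodule.subset_span
        rw [hLk]
        exact ⟨0, Submodule.zero_mem _, v, hv, by simp⟩
      have h2 := hstab _ h1
      rw [hspanc] at h2
      obtain ⟨x, hx, v', hv', hEq⟩ := h2
      refine ⟨τ⁻¹ • x, Submodule.smul_mem _ _ hx, v', hv', ?_⟩
      have h3 : τ • g v = x + τ • v' := by rw [← map_smul]; exact hEq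
      calc g v = τ⁻¹ • (τ • g v) := by rw [smul_smul, inv_mul_cancel₀ hτ, one_smul]
        _ = τ⁻¹ • x + τ⁻¹ • τ • v' := by rw [h3, smul_add, smul_smul]
        _ = τ⁻¹ • x + v' := by rw [smul_smul, inv_mul_cancel₀ hτ, one_smul]
    have hpWgVF : ∀ v ∈ VF, pW (g v) ∈ VF := by
      intro v hv
      obtain ⟨x, hx, v', hv', hEq⟩ := hgVF v hv
      have h1 : pW (g v) = v' := by
        have h2 := (hproj x hx v' (hVFW hv') 0 (Submodule.zero_mem _)).2.1
        rw [add_zero] at h2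
        rw [hEq, h2]
      rw [h1]; exact hv'
    -- g restricted to Xk as an equivalence
    set gX : Xk →ₗ[E] Xk := (g : V →ₗ[E] V).restrict (p := Xk) (q := Xk)
      (fun x hx => hgX x hx) with hgXdef
    have gXinj : Function.Injective gX := by
      intro a b hab
      apply Subtype.ext
      apply g.injective
      have := congrArg (Subtype.val) hab
      simpa [hgXdef] using this
    set eX : Xk ≃ₗ[E] Xk := LinearEquiv.ofBijective gX
      ⟨gXinj, LinearMap.injective_iff_surjective.mp gXinj⟩ with heX
    have heXapp : ∀ x : Xk, (eX x : V) = g x := by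
      intro x
      show (gX x : V) = g x
      simp [hgXdef]
    -- the pairing Yk → Dual Xk
    set φ₀ : Yk →ₗ[E] Module.Dual E Xk := (q.compl₁₂ Xk.subtype Yk.subtype).flip with hφ₀
    have hφ₀app : ∀ (y : Yk) (x : Xk), φ₀ y x = q (x : V) (y : V) := by
      intro y x; rfl
    have hφ₀inj : Function.Injective φ₀ := by
      rw [← LinearMap.ker_eq_bot]
      apply (Submodule.eq_bot_iff _).mpr
      intro y hy
      rw [LinearMap.mem_ker] at hy
      apply Subtype.ext
      apply hnd.1
      intro t
      obtain ⟨x', hx', w', hw', y', hy', rfl⟩ := hdec t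
      have h1 : q (y : V) x' = 0 := by
        rw [← hsymm.eq x' (y : V)]
        have := congrArg (fun ψ => ψ (⟨x', hx'⟩ : Xk)) hy
        simpa [hφ₀app] using this
      rw [map_add, map_add, h1, hYW (y : V) y.2 w' hw', hYkiso (y : V) y.2 y' hy']
      simp
    set φ : Yk ≃ₗ[E] Module.Dual E Xk := LinearMap.linearEquivOfInjective φ₀ hφ₀inj
      (by rw [hdYk, Subspace.dual_finrank_eq, hdXk]) with hφ
    have hφapp : ∀ y : Yk, φ y = φ₀ y := fun y => rfl
    set mgY : Yk →ₗ[E] Yk :=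
      (φ.symm : Module.Dual E Xk →ₗ[E] Yk) ∘ₗ eX.symm.toLinearMap.dualMap ∘ₗ
        (φ : Yk →ₗ[E] Module.Dual E Xk) with hmgY
    have hkey : ∀ (x : Xk) (y : Yk), q (g (x : V)) ((mgY y : Yk) : V) = q (x : V) (y : V) := by
      intro x y
      have h1 : (φ (mgY y)) (eX x) = (φ y) (eX.symm (eX x)) := by
        rw [hmgY]
        simp [LinearMap.dualMap_apply]
      rw [eX.symm_apply_apply] at h1
      rw [hφapp, hφapp, hφ₀app, hφ₀app, heXapp] at h1
      exact h1
    -- evaluation of the projections on each piece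
    have hPx : ∀ x ∈ Xk, pX x = x ∧ pW x = 0 ∧ pY x = 0 := fun x hx => by
      simpa using hproj x hx 0 (Submodule.zero_mem _) 0 (Submodule.zero_mem _)
    have hPw : ∀ w ∈ W, pX w = 0 ∧ pW w = w ∧ pY w = 0 := fun w hw => by
      simpa using hproj 0 (Submodule.zero_mem _) w hw 0 (Submodule.zero_mem _)
    have hPy : ∀ y ∈ Yk, pX y = 0 ∧ pW y = 0 ∧ pY y = y := fun y hy => by
      simpa using hproj 0 (Submodule.zero_mem _) 0 (Submodule.zero_mem _) y hy
    have hπYx : ∀ x ∈ Xk, πY x = 0 := fun x hx =>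
      Submodule.coe_eq_zero.mp ((hPx x hx).2.2)
    have hπYw : ∀ w ∈ W, πY w = 0 := fun w hw =>
      Submodule.coe_eq_zero.mp ((hPw w hw).2.2)
    have hπYy : ∀ (y : V) (hy : y ∈ Yk), πY y = ⟨y, hy⟩ := fun y hy =>
      Subtype.ext ((hPy y hy).2.2)
    -- the Levi element
    set mgYV : V →ₗ[E] V := Yk.subtype ∘ₗ mgY ∘ₗ πY with hmgYV
    set mgl : V →ₗ[E] V :=
      (g : V →ₗ[E] V) ∘ₗ pX + pW ∘ₗ (g : V →ₗ[E] V) ∘ₗ pW + mgYV with hmgl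
    have hmglx : ∀ x ∈ Xk, mgl x = g x := by
      intro x hx
      rw [hmgl]
      simp only [LinearMap.add_apply, LinearMap.comp_apply, LinearEquiv.coe_coe, hmgYV]
      rw [(hPx x hx).1, (hPx x hx).2.1, hπYx x hx]
      simp
    have hmglw : ∀ w ∈ W, mgl w = pW (g w) := by
      intro w hw
      rw [hmgl]
      simp only [LinearMap.add_apply, LinearMap.comp_apply, LinearEquiv.coe_coe, hmgYV]
      rw [(hPw w hw).1, (hPw w hw).2.1, hπYw w hw]
      simp
    have hmgly : ∀ (y : V) (hy : y ∈ Yk), mgl y = ((mgY ⟨y, hy⟩ : Yk) : V) := by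
      intro y hy
      rw [hmgl]
      simp only [LinearMap.add_apply, LinearMap.comp_apply, LinearEquiv.coe_coe, hmgYV]
      rw [(hPy y hy).1, (hPy y hy).2.1, hπYy y hy]
      simp
    -- the middle-block compatibility
    have hexp2 : ∀ a b c d : V, q (a + b) (c + d) = q a c + q a d + q b c + q b d := by
      intro a b c d
      simp only [map_add, LinearMap.add_apply]
      ring
    have ht5 : ∀ w ∈ W, ∀ w' ∈ W, q (pW (g w)) (pW (g w')) = q w w' := by
      intro w hw w' hw'
      have h1 := hg w w'
      rw [hgWdec w hw, hgWdec w' hw', hexp2] at h1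
      rw [hXkiso (pX (g w)) (hpXmem (g w)) (pX (g w')) (hpXmem (g w')),
        hXW (pX (g w)) (hpXmem (g w)) (pW (g w')) (hpWmem (g w')),
        hWX (pW (g w)) (hpWmem (g w)) (pX (g w')) (hpXmem (g w'))] at h1
      simpa using h1
    have hexp : ∀ a b c d e f : V, q (a + b + c) (d + e + f) =
        q a d + q a e + q a f + (q b d + q b e + q b f) + (q c d + q c e + q c f) := by
      intro a b c d e f
      simp only [map_add, LinearMap.add_apply]
      ring
    -- mgl is an isometry
    have hiso : ∀ a b : V, q (mgl a) (mgl b) = q a b := by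
      intro a b
      obtain ⟨x, hx, w, hw, y, hy, rfl⟩ := hdec a
      obtain ⟨x', hx', w', hw', y', hy', rfl⟩ := hdec b
      have hma : mgl (x + w + y) = g x + pW (g w) + ((mgY ⟨y, hy⟩ : Yk) : V) := by
        rw [map_add, map_add, hmglx x hx, hmglw w hw, hmgly y hy]
      have hmb : mgl (x' + w' + y') = g x' + pW (g w') + ((mgY ⟨y', hy'⟩ : Yk) : V) := by
        rw [map_add, map_add, hmglx x' hx', hmglw w' hw', hmgly y' hy']
      rw [hma, hmb, hexp, hexp]
      have e1 : q (g x) (g x') = q x x' := hg x x'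
      have e2 : q (g x) (pW (g w')) = 0 := hXW _ (hgX x hx) _ (hpWmem _)
      have e3 : q (g x) ((mgY ⟨y', hy'⟩ : Yk) : V) = q x y' := hkey ⟨x, hx⟩ ⟨y', hy'⟩
      have e4 : q (pW (g w)) (g x') = 0 := hWX _ (hpWmem _) _ (hgX x' hx')
      have e5 : q (pW (g w)) (pW (g w')) = q w w' := ht5 w hw w' hw'
      have e6 : q (pW (g w)) ((mgY ⟨y', hy'⟩ : Yk) : V) = 0 :=
        hWY _ (hpWmem _) _ (mgY ⟨y', hy'⟩).2
      have e7 : q ((mgY ⟨y, hy⟩ : Yk) : V) (g x') = q y x' := by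
        calc q ((mgY ⟨y, hy⟩ : Yk) : V) (g x') = q (g x') ((mgY ⟨y, hy⟩ : Yk) : V) :=
              (hsymm.eq _ _).symm
          _ = q x' y := hkey ⟨x', hx'⟩ ⟨y, hy⟩
          _ = q y x' := hsymm.eq _ _
      have e8 : q ((mgY ⟨y, hy⟩ : Yk) : V) (pW (g w')) = 0 :=
        hYW _ (mgY ⟨y, hy⟩).2 _ (hpWmem _)
      have e9 : q ((mgY ⟨y, hy⟩ : Yk) : V) ((mgY ⟨y', hy'⟩ : Yk) : V) = 0 :=
        hYkiso _ (mgY ⟨y, hy⟩).2 _ (mgY ⟨y', hy'⟩).2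
      have r2 : q x w' = 0 := hXW x hx w' hw'
      have r4 : q w x' = 0 := hWX w hw x' hx'
      have r6 : q w y' = 0 := hWY w hw y' hy'
      have r8 : q y w' = 0 := hYW y hy w' hw'
      have r9 : q y y' = 0 := hYkiso y hy y' hy'
      rw [e1, e2, e3, e4, e5, e6, e7, e8, e9, r2, r4, r6, r8, r9]
    have hinj : Function.Injective mgl := by
      rw [← LinearMap.ker_eq_bot]
      apply (Submodule.eq_bot_iff _).mpr
      intro z hz
      rw [LinearMap.mem_ker] at hz
      apply hnd.1
      intro t
      have h1 := (hiso z t).symm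
      rw [hz] at h1
      simpa using h1
    set mgE : V ≃ₗ[E] V := LinearEquiv.ofBijective mgl
      ⟨hinj, LinearMap.injective_iff_surjective.mp hinj⟩ with hmgE
    have hmgEapp : ∀ v : V, mgE v = mgl v := fun v => rfl
    set u : V ≃ₗ[E] V := g.trans mgE.symm with hu
    have huapp : ∀ v : V, u v = mgE.symm (g v) := fun v => rfl
    have hmgEX : ∀ x ∈ Xk, mgE x ∈ Xk := fun x hx => by
      rw [hmgEapp, hmglx x hx]; exact hgX x hx
    have hmgEXmap : Submodule.map (mgE : V →ₗ[E] V) Xk = Xk := by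
      apply Submodule.eq_of_le_of_finrank_eq
      · rintro _ ⟨x, hx, rfl⟩; exact hmgEX x hx
      · exact mgE.finrank_map_eq Xk
    have hmgEsX : ∀ x ∈ Xk, mgE.symm x ∈ Xk := by
      intro x hx
      rw [← hmgEXmap] at hx
      obtain ⟨x', hx', hEq⟩ := hx
      have h1 : mgE.symm x = x' := by rw [← hEq]; exact mgE.symm_apply_apply x'
      rw [h1]; exact hx'
    have hisos : ∀ a b : V, q (mgE.symm a) (mgE.symm b) = q a b := by
      intro a b
      have h1 := hiso (mgE.symm a) (mgE.symm b)
      rw [← hmgEapp, ← hmgEapp, mgE.apply_symm_apply, mgE.apply_symm_apply] at h1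
      exact h1.symm
    have huXfix : ∀ x ∈ Xk, u x = x := by
      intro x hx
      apply mgE.injective
      rw [huapp, mgE.apply_symm_apply, hmgEapp, hmglx x hx]
    refine ⟨mgE, u, ?_, ?_, ?_, ⟨?_, ?_, ?_, ?_⟩, ⟨huXfix, ?_⟩⟩
    · intro a b; rw [hmgEapp, hmgEapp]; exact hiso a b
    · intro a b; rw [huapp, huapp, hisos]; exact hg a b
    · intro x; rw [huapp, mgE.apply_symm_apply]
    · exact hmgEX
    · intro y hy; rw [hmgEapp, hmgly y hy]; exact (mgY ⟨y, hy⟩).2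
    · intro w hw; rw [hmgEapp, hmglw w hw]; exact hpWmem _
    · intro v hv; rw [hmgEapp, hmglw v (hVFW hv)]; exact hpWgVF v hv
    · intro w hwp
      have hpYw : pY w = 0 := hperp w hwp
      have hwdec : w = pX w + pW w := by
        have h1 := hsum w
        rw [hpYw, add_zero] at h1
        exact h1.symm
      have huw0 : u (pW w) - pW w = mgE.symm (pX (g (pW w))) := by
        rw [huapp]
        have h1 : g (pW w) = pX (g (pW w)) + mgE (pW w) := by
          rw [hmgEapp, hmglw _ (hpWmem w)]
          exact hgWdec _ (hpWmem w)
        conv_lhs => rw [h1]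
        rw [map_add, mgE.symm_apply_apply]
        abel
      have h2 : u w - w = mgE.symm (pX (g (pW w))) := by
        conv_lhs => rw [hwdec]
        rw [map_add, huXfix _ (hpXmem w),
          show pX w + u (pW w) - (pX w + pW w) = u (pW w) - pW w by abel, huw0]
      rw [h2]
      exact hmgEsX _ (hpXmem _)
  · -- backward direction
    rintro ⟨mg, u, hmq, huq, hcomp, ⟨hmX, hmY, hmW, hmVF⟩, huX, huN⟩
    -- mg.symm stabilizes Xk
    have hmXmap : Submodule.map (mg : V →ₗ[E] V) Xk = Xk := by
      apply Submodule.eq_of_le_of_finrank_eq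
      · rintro _ ⟨x, hx, rfl⟩; exact hmX x hx
      · exact mg.finrank_map_eq Xk
    have hmsX : ∀ x ∈ Xk, mg.symm x ∈ Xk := by
      intro x hx
      rw [← hmXmap] at hx
      obtain ⟨x', hx', hEq⟩ := hx
      have : mg.symm x = x' := by
        rw [← hEq]; exact mg.symm_apply_apply x'
      rw [this]; exact hx'
    -- mg.symm stabilizes VF
    have hmVFmap : Submodule.map ((mg.restrictScalars F : V ≃ₗ[F] V) : V →ₗ[F] V) VF = VF := by
      apply Submodule.eq_of_le_of_finrank_eq
      · rintro _ ⟨v, hv, rfl⟩; exact hmVF v hv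
      · exact (mg.restrictScalars F).finrank_map_eq VF
    have hmsVF : ∀ v ∈ VF, mg.symm v ∈ VF := by
      intro v hv
      rw [← hmVFmap] at hv
      obtain ⟨v', hv', hEq⟩ := hv
      have : mg.symm v = v' := by
        rw [← hEq]
        exact mg.symm_apply_apply v'
      rw [this]; exact hv'
    -- u moves VF-vectors by elements of Xk
    have huv : ∀ v ∈ VF, u v - v ∈ Xk := fun v hv =>
      huN v (fun x hx => hVperpX v hv x hx)
    have husX : ∀ x ∈ Xk, u.symm x = x := by
      intro x hx
      conv_lhs => rw [← huX x hx]
      exact u.symm_apply_apply x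
    have husv : ∀ v ∈ VF, u.symm v - v ∈ Xk := by
      intro v hv
      have hperp' : ∀ x ∈ Xk, q (u.symm v) x = 0 := by
        intro x hx
        have h1 := huq (u.symm v) x
        rw [u.apply_symm_apply, huX x hx] at h1
        rw [← h1]; exact hVperpX v hv x hx
      have := huN (u.symm v) hperp'
      rw [u.apply_symm_apply] at this
      have h2 : u.symm v - v = -(v - u.symm v) := by abel
      rw [h2]; exact neg_mem this
    have hgsymm : ∀ z : V, g.symm z = u.symm (mg.symm z) := by
      intro z
      apply g.injective
      rw [g.apply_symm_apply, hcomp, u.apply_symm_apply, mg.apply_symm_apply]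
    constructor
    · -- g stabilizes span F Lk
      intro z hz
      rw [hspanc] at hz ⊢
      obtain ⟨x, hx, v, hv, rfl⟩ := hz
      set d := u v - v with hd
      have hdX : d ∈ Xk := huv v hv
      have huz : u (x + τ • v) = (x + τ • d) + τ • v := by
        rw [map_add, huX x hx, map_smul]
        have : u v = v + d := by rw [hd]; abel
        rw [this, smul_add]; abel
      refine ⟨mg x + τ • mg d, ?_, mg v, hmVF v hv, ?_⟩
      · exact Submodule.add_mem _ (hmX x hx) (Submodule.smul_mem _ _ (hmX d hdX))
      · rw [hcomp, huz, map_add, map_add, map_smul, map_smul]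
        try abel
    · -- g.symm stabilizes span F Lk
      intro z hz
      rw [hspanc] at hz ⊢
      obtain ⟨x, hx, v, hv, rfl⟩ := hz
      rw [hgsymm]
      set x' := mg.symm x with hx'
      set v' := mg.symm v with hv'
      have hx'X : x' ∈ Xk := hmsX x hx
      have hv'VF : v' ∈ VF := hmsVF v hv
      set d := u.symm v' - v' with hd
      have hdX : d ∈ Xk := husv v' hv'VF
      have hms : mg.symm (x + τ • v) = x' + τ • v' := by
        rw [map_add, map_smul]
      refine ⟨x' + τ • d, Submodule.add_mem _ hx'X (Submodule.smul_mem _ _ hdX),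
        v', hv'VF, ?_⟩
      rw [hms, map_add, husX x' hx'X, map_smul]
      have : u.symm v' = v' + d := by rw [hd]; abel
      rw [this, smul_add]
      try abel
end

section
/- Let κ'(h) = max over all 2n×2n minors M of the matrix h of |det M|_F. For a = diag(a₁,…,aₙ) with each |a_i|_F ≤ 1, consider the 2n×4n matrix h(a) whose nonzero blocks are (a+a^{−1})/2 and (−a+a^{−1})/2 arranged as in the symplectic base change doubling computation. Then κ'(h(a)) ≥ C·∏_{i=1}^n |a_i|_F^{−2} for a constant C > 0 independent of a; consequently κ'(h(a))^{−Re(s)} ≤ C' ∏_{i=1}^n |a_i|_E^{Re(s)} for Re(s) ≥ 0. -/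
/-- Lower bound on the maximal `2n×2n` minor of the matrix `h(a)` arising
in the symplectic base change doubling computation: with
`κ'(h) = max_{2n×2n minors M} ‖det M‖`, one has `κ'(h(a)) ≥ C ∏ᵢ ‖aᵢ‖^{-2}` for a
constant `C > 0`, whenever `‖aᵢ‖ ≤ 1`; consequently `κ'(h(a))^{-s} ≤ C^{-s} ∏ᵢ |aᵢ|_E^{s}`
for `s ≥ 0`, where `|x|_E = ‖x‖²`. -/
theorem stmt18
    (F : Type*) [NontriviallyNormedField F] [CharZero F]
    (hna : IsNonarchimedean (norm : F → ℝ))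
    (n : ℕ) :
    ∃ C : ℝ, 0 < C ∧
      ∀ a : Fin n → F, (∀ i, a i ≠ 0) → (∀ i, ‖a i‖ ≤ 1) →
      ∀ h : Matrix (Fin n ⊕ Fin n) ((Fin n ⊕ Fin n) ⊕ (Fin n ⊕ Fin n)) F,
        h = Matrix.of (fun r c =>
          match r, c with
          | Sum.inl i, Sum.inl (Sum.inl j) => if i = j then (a i + (a i)⁻¹) / 2 else 0
          | Sum.inl i, Sum.inl (Sum.inr j) => if i = j then (-(a i) + (a i)⁻¹) / 2 else 0
          | Sum.inr i, Sum.inr (Sum.inl j) => if i = j then (-(a i) + (a i)⁻¹) / 2 else 0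
          | Sum.inr i, Sum.inr (Sum.inr j) => if i = j then (a i + (a i)⁻¹) / 2 else 0
          | _, _ => 0) →
      ∀ κ' : ℝ,
        κ' = ⨆ e : (Fin n ⊕ Fin n) ↪ ((Fin n ⊕ Fin n) ⊕ (Fin n ⊕ Fin n)),
          ‖(h.submatrix id e).det‖ →
        (C * ∏ i : Fin n, (‖a i‖ ^ 2)⁻¹ ≤ κ') ∧
          (∀ s : ℝ, 0 ≤ s →
            κ' ^ (-s) ≤ C ^ (-s) * ∏ i : Fin n, (‖a i‖ ^ 2) ^ s) := by
  classical
  refine ⟨1, one_pos, ?_⟩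
  intro a ha ha1 h hh κ' hκ
  set u : Fin n → F := fun i => (a i + (a i)⁻¹) / 2 with hu
  set v : Fin n → F := fun i => (-(a i) + (a i)⁻¹) / 2 with hv
  -- entry lemmas
  have hUL : ∀ i j, h (Sum.inl i) (Sum.inl (Sum.inl j)) = if i = j then u i else 0 := by
    intro i j; rw [hh]; rfl
  have hUR : ∀ i j, h (Sum.inl i) (Sum.inl (Sum.inr j)) = if i = j then v i else 0 := by
    intro i j; rw [hh]; rfl
  have hLL : ∀ i j, h (Sum.inr i) (Sum.inr (Sum.inl j)) = if i = j then v i else 0 := by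
    intro i j; rw [hh]; rfl
  have hLR : ∀ i j, h (Sum.inr i) (Sum.inr (Sum.inr j)) = if i = j then u i else 0 := by
    intro i j; rw [hh]; rfl
  have hZ1 : ∀ i c, h (Sum.inl i) (Sum.inr c) = 0 := by
    intro i c; rw [hh]; cases c <;> rfl
  have hZ2 : ∀ i c, h (Sum.inr i) (Sum.inl c) = 0 := by
    intro i c; rw [hh]; cases c <;> rfl
  have key : ∀ i, ‖a i‖⁻¹ ≤ ‖u i‖ ∨ ‖a i‖⁻¹ ≤ ‖v i‖ := by
    intro i
    have h2 : u i + v i = (a i)⁻¹ := by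
      field_simp [hu, hv]
      ring
    have : ‖a i‖⁻¹ ≤ max ‖u i‖ ‖v i‖ := by
      calc ‖a i‖⁻¹ = ‖(a i)⁻¹‖ := (norm_inv _).symm
      _ = ‖u i + v i‖ := by rw [h2]
      _ ≤ max ‖u i‖ ‖v i‖ := hna _ _
    exact le_max_iff.mp this
  let f : (Fin n ⊕ Fin n) → ((Fin n ⊕ Fin n) ⊕ (Fin n ⊕ Fin n)) := fun r =>
    match r with
    | Sum.inl i => if ‖a i‖⁻¹ ≤ ‖u i‖ then Sum.inl (Sum.inl i) else Sum.inl (Sum.inr i)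
    | Sum.inr i => if ‖a i‖⁻¹ ≤ ‖v i‖ then Sum.inr (Sum.inl i) else Sum.inr (Sum.inr i)
  have hinj : Function.Injective f := by
    have hli : Function.LeftInverse (fun x => match x with
        | Sum.inl (Sum.inl j) => Sum.inl j
        | Sum.inl (Sum.inr j) => Sum.inl j
        | Sum.inr (Sum.inl j) => Sum.inr j
        | Sum.inr (Sum.inr j) => (Sum.inr j : Fin n ⊕ Fin n)) f := by
      intro r
      cases r <;> simp only [f] <;> split_ifs <;> rfl
    exact hli.injective
  let e : (Fin n ⊕ Fin n) ↪ ((Fin n ⊕ Fin n) ⊕ (Fin n ⊕ Fin n)) := ⟨f, hinj⟩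
  let d : (Fin n ⊕ Fin n) → F := fun r =>
    match r with
    | Sum.inl i => if ‖a i‖⁻¹ ≤ ‖u i‖ then u i else v i
    | Sum.inr i => if ‖a i‖⁻¹ ≤ ‖v i‖ then v i else u i
  have he1 : ∀ j, (e (Sum.inl j) = Sum.inl (Sum.inl j) ∧ d (Sum.inl j) = u j) ∨
      (e (Sum.inl j) = Sum.inl (Sum.inr j) ∧ d (Sum.inl j) = v j) := by
    intro j
    by_cases hc : ‖a j‖⁻¹ ≤ ‖u j‖
    · exact Or.inl ⟨if_pos hc, if_pos hc⟩
    · exact Or.inr ⟨if_neg hc, if_neg hc⟩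
  have he2 : ∀ j, (e (Sum.inr j) = Sum.inr (Sum.inl j) ∧ d (Sum.inr j) = v j) ∨
      (e (Sum.inr j) = Sum.inr (Sum.inr j) ∧ d (Sum.inr j) = u j) := by
    intro j
    by_cases hc : ‖a j‖⁻¹ ≤ ‖v j‖
    · exact Or.inl ⟨if_pos hc, if_pos hc⟩
    · exact Or.inr ⟨if_neg hc, if_neg hc⟩
  have hdiag : h.submatrix id e = Matrix.diagonal d := by
    ext r r'
    rw [Matrix.submatrix_apply, id_eq]
    cases r with
    | inl i =>
      cases r' with
      | inl j =>
        rcases he1 j with ⟨heq, hd⟩ | ⟨heq, hd⟩ <;> rw [heq] <;>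
          [rw [hUL i j]; rw [hUR i j]] <;>
        · by_cases hij : i = j
          · subst hij; simp [Matrix.diagonal_apply, hd]
          · simp [Matrix.diagonal_apply, hij]
      | inr j =>
        rcases he2 j with ⟨heq, _⟩ | ⟨heq, _⟩ <;> rw [heq, hZ1] <;>
          simp [Matrix.diagonal_apply]
    | inr i =>
      cases r' with
      | inl j =>
        rcases he1 j with ⟨heq, _⟩ | ⟨heq, _⟩ <;> rw [heq, hZ2] <;>
          simp [Matrix.diagonal_apply]
      | inr j =>
        rcases he2 j with ⟨heq, hd⟩ | ⟨heq, hd⟩ <;> rw [heq] <;>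
          [rw [hLL i j]; rw [hLR i j]] <;>
        · by_cases hij : i = j
          · subst hij; simp [Matrix.diagonal_apply, hd]
          · simp [Matrix.diagonal_apply, hij]
  have hdbound : ∀ i, ‖a i‖⁻¹ ≤ ‖d (Sum.inl i)‖ ∧ ‖a i‖⁻¹ ≤ ‖d (Sum.inr i)‖ := by
    intro i
    constructor
    · show ‖a i‖⁻¹ ≤ ‖if ‖a i‖⁻¹ ≤ ‖u i‖ then u i else v i‖
      split_ifs with hc
      · exact hc
      · exact (key i).resolve_left hc
    · show ‖a i‖⁻¹ ≤ ‖if ‖a i‖⁻¹ ≤ ‖v i‖ then v i else u i‖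
      split_ifs with hc
      · exact hc
      · exact (key i).resolve_right hc
  have hnormdet : ∏ i : Fin n, (‖a i‖ ^ 2)⁻¹ ≤ ‖(h.submatrix id e).det‖ := by
    rw [hdiag, Matrix.det_diagonal, norm_prod, Fintype.prod_sum_type, ← Finset.prod_mul_distrib]
    apply Finset.prod_le_prod
    · intro i _
      have : 0 < ‖a i‖ := norm_pos_iff.mpr (ha i)
      positivity
    · intro i _
      have hai : 0 < ‖a i‖ := norm_pos_iff.mpr (ha i)
      have hsq : (‖a i‖ ^ 2)⁻¹ = ‖a i‖⁻¹ * ‖a i‖⁻¹ := by rw [sq, mul_inv]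
      rw [hsq]
      exact mul_le_mul (hdbound i).1 (hdbound i).2 (by positivity) (norm_nonneg _)
  have hκge : ∏ i : Fin n, (‖a i‖ ^ 2)⁻¹ ≤ κ' := by
    rw [hκ]
    refine hnormdet.trans ?_
    exact le_ciSup (f := fun e' : (Fin n ⊕ Fin n) ↪ ((Fin n ⊕ Fin n) ⊕ (Fin n ⊕ Fin n)) =>
      ‖(h.submatrix id e').det‖) (Set.Finite.bddAbove (Set.finite_range _)) e
  have hPpos : 0 < ∏ i : Fin n, (‖a i‖ ^ 2)⁻¹ := by
    apply Finset.prod_pos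
    intro i _
    have : 0 < ‖a i‖ := norm_pos_iff.mpr (ha i)
    positivity
  refine ⟨by simpa using hκge, ?_⟩
  intro s hs
  calc κ' ^ (-s) ≤ (∏ i : Fin n, (‖a i‖ ^ 2)⁻¹) ^ (-s) :=
        Real.rpow_le_rpow_of_nonpos hPpos hκge (neg_nonpos.mpr hs)
    _ = ∏ i : Fin n, ((‖a i‖ ^ 2)⁻¹) ^ (-s) := by
        rw [← Real.finset_prod_rpow]
        intro i _
        positivity
    _ = ∏ i : Fin n, (‖a i‖ ^ 2) ^ s := by
        apply Finset.prod_congr rfl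
        intro i _
        rw [Real.inv_rpow (by positivity), Real.rpow_neg (by positivity), inv_inv]
    _ = (1:ℝ) ^ (-s) * ∏ i : Fin n, (‖a i‖ ^ 2) ^ s := by rw [Real.one_rpow, one_mul]
end
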